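/- arXiv:2512.14568 — 6 statements merged into one kernel-verified Lean document; each statement's English description precedes it below -/
import Mathlib

section
/- Let L : ℝ^d → ℝ be convex with L(0) = 0, and let H = L* be its Legendre–Fenchel transform. For μ ∈ 𝒫₂(ℝ^d), define the relaxed Hamiltonian ℋ(γ) = ∫ H(p) dγ(x,p) and the relaxed Lagrangian ℒ(ξ) = ∫ L(v) dξ(x,v) on plans with first marginal μ. Then for every γ with first marginal μ, ℋ(γ) = sup over ξ with first marginal μ and over θ ∈ Γ_μ(γ,ξ) of [∫ ⟨−v, p⟩ dθ(x,p,v) − ℒ(ξ)]. -/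
open MeasureTheory Set Filter Metric
open scoped Topology ENNReal NNReal

noncomputable section

abbrev E (d : ℕ) : Type := EuclideanSpace ℝ (Fin d)

/-- Real inner product. -/
def rinner {d : ℕ} (x y : E d) : ℝ := inner ℝ x y

/-- The second moment of a measure. -/
def secondMoment {d : ℕ} (μ : Measure (E d)) : ℝ := ∫ x, ‖x‖ ^ 2 ∂μ

/-- `γ` is a coupling of `μ` and `ν`. -/
def IsCoupling {d : ℕ} (γ : Measure (E d × E d)) (μ ν : Measure (E d)) : Prop :=
  γ.map Prod.fst = μ ∧ γ.map Prod.snd = ν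

/-- The 2-Wasserstein distance. -/
def W2 {d : ℕ} (μ ν : Measure (E d)) : ℝ :=
  sInf {c | ∃ γ : Measure (E d × E d), IsProbabilityMeasure γ ∧ IsCoupling γ μ ν ∧
    c = Real.sqrt (∫ p, ‖p.1 - p.2‖ ^ 2 ∂γ)}

/-- Probability measures with finite second moment. -/
def P2 (d : ℕ) : Set (Measure (E d)) :=
  {μ | IsProbabilityMeasure μ ∧ Integrable (fun x => ‖x‖ ^ 2) μ}

/-- Plans (velocity plans) with first marginal `μ` and finite second moment. -/
def plans {d : ℕ} (μ : Measure (E d)) : Set (Measure (E d × E d)) :=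
  {γ | IsProbabilityMeasure γ ∧ γ.map Prod.fst = μ ∧
    Integrable (fun p => ‖p.1‖ ^ 2 + ‖p.2‖ ^ 2) γ}

/-- The Wasserstein norm of a plan: `‖γ‖_μ = (∫ |z|² dγ(x,z))^{1/2}`. -/
def plNorm {d : ℕ} (γ : Measure (E d × E d)) : ℝ := Real.sqrt (∫ p, ‖p.2‖ ^ 2 ∂γ)

/-- The exponential map `exp_μ(γ) = (π₁ + π₂)_# γ`. -/
def expMap {d : ℕ} (γ : Measure (E d × E d)) : Measure (E d) :=
  γ.map (fun p => p.1 + p.2)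

/-- Rescaling of a plan in the second coordinate: `λ·γ = (π₁, λπ₂)_# γ`. -/
def scal {d : ℕ} (lam : ℝ) (γ : Measure (E d × E d)) : Measure (E d × E d) :=
  γ.map (fun p => (p.1, lam • p.2))

/-- Couplings of two plans along their common first marginal. -/
def GammaMu {d : ℕ} (γ₁ γ₂ : Measure (E d × E d)) : Set (Measure (E d × E d × E d)) :=
  {θ | IsProbabilityMeasure θ ∧ θ.map (fun q => (q.1, q.2.1)) = γ₁ ∧
    θ.map (fun q => (q.1, q.2.2)) = γ₂}

/-- The relaxed Lagrangian `ℒ(γ) = ∫ L(v) dγ(x,v)`. -/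
def Lag {d : ℕ} (L : E d → ℝ) (γ : Measure (E d × E d)) : ℝ := ∫ p, L p.2 ∂γ

/-! ### Auxiliary material for the proof -/

section Aux

variable {d : ℕ}

lemma rinner_continuous : Continuous (fun q : E d × E d => rinner q.1 q.2) :=
  continuous_inner

lemma abs_rinner_le (x y : E d) : |rinner x y| ≤ ‖x‖ * ‖y‖ :=
  abs_real_inner_le_norm x y

/-- A measurable selector for the max of the first `n+1` affine functions
`p ↦ ⟪-v k, p⟫ - L (v k)`. -/
def selT (L : E d → ℝ) (v : ℕ → E d) : ℕ → E d → E d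
  | 0 => fun _ => v 0
  | (n+1) => fun p =>
      if rinner (-(selT L v n p)) p - L (selT L v n p)
          < rinner (-(v (n+1))) p - L (v (n+1))
      then v (n+1) else selT L v n p

/-- The value selected by `selT`. -/
def fsel (L : E d → ℝ) (v : ℕ → E d) (n : ℕ) (p : E d) : ℝ :=
  rinner (-(selT L v n p)) p - L (selT L v n p)

lemma fval_measurable {L : E d → ℝ} (hL : Continuous L) {T : E d → E d}
    (hT : Measurable T) :
    Measurable (fun p => rinner (-(T p)) p - L (T p)) := by
  have h1 : Measurable fun p => rinner (-(T p)) p :=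
    rinner_continuous.measurable.comp (hT.neg.prodMk measurable_id)
  exact h1.sub (hL.measurable.comp hT)

lemma selT_measurable {L : E d → ℝ} (hL : Continuous L) (v : ℕ → E d) :
    ∀ n, Measurable (selT L v n) := by
  intro n
  induction n with
  | zero => exact measurable_const
  | succ n ih =>
    have hcond : MeasurableSet {p : E d |
        rinner (-(selT L v n p)) p - L (selT L v n p)
          < rinner (-(v (n+1))) p - L (v (n+1))} :=
      measurableSet_lt (fval_measurable hL ih) (fval_measurable hL measurable_const)
    exact Measurable.ite hcond measurable_const ih

lemma fsel_measurable {L : E d → ℝ} (hL : Continuous L) (v : ℕ → E d) (n : ℕ) :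
    Measurable (fsel L v n) :=
  fval_measurable hL (selT_measurable hL v n)

lemma fsel_succ (L : E d → ℝ) (v : ℕ → E d) (n : ℕ) (p : E d) :
    fsel L v (n+1) p = max (fsel L v n p) (rinner (-(v (n+1))) p - L (v (n+1))) := by
  simp only [fsel, selT]
  split_ifs with h
  · exact (max_eq_right h.le).symm
  · exact (max_eq_left (not_lt.mp h)).symm

lemma fsel_mono (L : E d → ℝ) (v : ℕ → E d) (p : E d) :
    Monotone (fun n => fsel L v n p) := by
  apply monotone_nat_of_le_succ
  intro n
  rw [fsel_succ]
  exact le_max_left _ _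

lemma le_fsel (L : E d → ℝ) (v : ℕ → E d) {k n : ℕ} (hk : k ≤ n) (p : E d) :
    rinner (-(v k)) p - L (v k) ≤ fsel L v n p := by
  induction n with
  | zero =>
    interval_cases k
    simp [fsel, selT]
  | succ n ih =>
    rcases Nat.lt_or_ge k (n+1) with h | h
    · exact le_trans (ih (Nat.lt_succ_iff.mp h)) (fsel_mono L v p (Nat.le_succ n))
    · have : k = n + 1 := le_antisymm hk h
      subst this
      rw [fsel_succ]
      exact le_max_right _ _

lemma selT_bound (L : E d → ℝ) (v : ℕ → E d) (n : ℕ) :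
    ∃ B : ℝ, ∀ p, ‖selT L v n p‖ ≤ B := by
  induction n with
  | zero => exact ⟨‖v 0‖, fun p => le_refl _⟩
  | succ n ih =>
    obtain ⟨B, hB⟩ := ih
    refine ⟨max B ‖v (n+1)‖, fun p => ?_⟩
    simp only [selT]
    split_ifs with h
    · exact le_max_right _ _
    · exact le_trans (hB p) (le_max_left _ _)

end Aux

theorem relaxed_hamiltonian_fenchel {d : ℕ} (L H : E d → ℝ)
    (hLconv : ConvexOn ℝ Set.univ L) (hL0 : L 0 = 0)
    (hquad : ∃ C > 0, ∀ z : E d, |L z| ≤ C * (1 + ‖z‖ ^ 2))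
    (hcoer : ∃ c > 0, ∃ C > 0, ∀ z : E d, c * ‖z‖ ^ 2 - C ≤ L z)
    (hH : ∀ p : E d, IsLUB {r | ∃ v : E d, r = (rinner (-v) (p)) - L v} (H p))
    (μ : Measure (E d)) (hμ : μ ∈ P2 d)
    (γ : Measure (E d × E d)) (hγ : γ ∈ plans μ)
    (hHint : Integrable (fun q : E d × E d => H q.2) γ) :
    (∫ q, H q.2 ∂γ) =
      sSup {r | ∃ ξ ∈ plans μ, ∃ θ ∈ GammaMu γ ξ,
        r = (∫ q, (rinner (-q.2.2) (q.2.1)) ∂θ) - ∫ q, L q.2 ∂ξ} := by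
  classical
  obtain ⟨C₀, hC₀pos, hC₀⟩ := hquad
  have hLcont : Continuous L := by
    have := hLconv.continuousOn isOpen_univ
    rwa [← continuousOn_univ]
  haveI hγprob : IsProbabilityMeasure γ := hγ.1
  have hm1 : Measurable (fun q : E d × E d × E d => (q.1, q.2.1)) :=
    measurable_fst.prodMk (measurable_fst.comp measurable_snd)
  have hm2 : Measurable (fun q : E d × E d × E d => (q.1, q.2.2)) :=
    measurable_fst.prodMk (measurable_snd.comp measurable_snd)
  -- second-moment integrability facts for γ
  have hsq2γ : Integrable (fun q : E d × E d => ‖q.2‖ ^ 2) γ := by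
    refine hγ.2.2.mono ?_ (ae_of_all _ fun q => ?_)
    · exact ((continuous_norm.comp continuous_snd).pow 2).aestronglyMeasurable
    · simp only [Pi.add_apply, Real.norm_eq_abs]
      rw [abs_of_nonneg (by positivity), abs_of_nonneg (by positivity)]
      nlinarith [sq_nonneg ‖q.1‖]
  have hsq1γ : Integrable (fun q : E d × E d => ‖q.1‖ ^ 2) γ := by
    refine hγ.2.2.mono ?_ (ae_of_all _ fun q => ?_)
    · exact ((continuous_norm.comp continuous_fst).pow 2).aestronglyMeasurable
    · simp only [Pi.add_apply, Real.norm_eq_abs]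
      rw [abs_of_nonneg (by positivity), abs_of_nonneg (by positivity)]
      nlinarith [sq_nonneg ‖q.2‖]
  have hn2γ : Integrable (fun q : E d × E d => ‖q.2‖) γ := by
    refine ((integrable_const (1:ℝ)).add hsq2γ).mono ?_ (ae_of_all _ fun q => ?_)
    · exact (continuous_norm.comp continuous_snd).aestronglyMeasurable
    · simp only [Pi.add_apply, Real.norm_eq_abs]
      rw [abs_of_nonneg (norm_nonneg _), abs_of_nonneg (by positivity)]
      nlinarith [norm_nonneg q.2, sq_nonneg (‖q.2‖ - 1)]
  set S : Set ℝ := {r | ∃ ξ ∈ plans μ, ∃ θ ∈ GammaMu γ ξ,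
      r = (∫ q, (rinner (-q.2.2) (q.2.1)) ∂θ) - ∫ q, L q.2 ∂ξ} with hS
  -- Part 1: ∫ H dγ is an upper bound of S
  have hub : ∀ r ∈ S, r ≤ ∫ q, H q.2 ∂γ := by
    rintro r ⟨ξ, hξ, θ, hθ, rfl⟩
    obtain ⟨hθprob, hθ1, hθ2⟩ := hθ
    haveI := hθprob
    have hp2 : Integrable (fun q : E d × E d × E d => ‖q.2.1‖ ^ 2) θ := by
      have := (integrable_map_measure (f := fun q : E d × E d × E d => (q.1, q.2.1))
        (g := fun q : E d × E d => ‖q.2‖ ^ 2)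
        (by rw [hθ1]; exact ((continuous_norm.comp continuous_snd).pow 2).aestronglyMeasurable)
        hm1.aemeasurable).mp (by rw [hθ1]; exact hsq2γ)
      simpa [Function.comp_def] using this
    have hsq2ξ : Integrable (fun q : E d × E d => ‖q.2‖ ^ 2) ξ := by
      refine hξ.2.2.mono ?_ (ae_of_all _ fun q => ?_)
      · exact ((continuous_norm.comp continuous_snd).pow 2).aestronglyMeasurable
      · simp only [Pi.add_apply, Real.norm_eq_abs]
        rw [abs_of_nonneg (by positivity), abs_of_nonneg (by positivity)]
        nlinarith [sq_nonneg ‖q.1‖]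
    have hv2 : Integrable (fun q : E d × E d × E d => ‖q.2.2‖ ^ 2) θ := by
      have := (integrable_map_measure (f := fun q : E d × E d × E d => (q.1, q.2.2))
        (g := fun q : E d × E d => ‖q.2‖ ^ 2)
        (by rw [hθ2]; exact ((continuous_norm.comp continuous_snd).pow 2).aestronglyMeasurable)
        hm2.aemeasurable).mp (by rw [hθ2]; exact hsq2ξ)
      simpa [Function.comp_def] using this
    have hAmeas : AEStronglyMeasurable (fun q : E d × E d × E d => rinner (-q.2.2) q.2.1) θ :=
      (rinner_continuous.comp
        (((continuous_snd.comp continuous_snd).neg).prodMk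
          (continuous_fst.comp continuous_snd))).aestronglyMeasurable
    have hAint : Integrable (fun q : E d × E d × E d => rinner (-q.2.2) q.2.1) θ := by
      refine (hp2.add hv2).mono hAmeas (ae_of_all _ fun q => ?_)
      simp only [Pi.add_apply, Real.norm_eq_abs]
      have h1 := abs_rinner_le (-q.2.2) q.2.1
      rw [norm_neg] at h1
      rw [abs_of_nonneg (by positivity : (0:ℝ) ≤ ‖q.2.1‖ ^ 2 + ‖q.2.2‖ ^ 2)]
      nlinarith [sq_nonneg (‖q.2.2‖ - ‖q.2.1‖), norm_nonneg q.2.1, norm_nonneg q.2.2]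
    have hBint : Integrable (fun q : E d × E d × E d => L q.2.2) θ := by
      refine (((integrable_const (1:ℝ)).add hv2).const_mul C₀).mono
        ((hLcont.comp (continuous_snd.comp continuous_snd)).aestronglyMeasurable)
        (ae_of_all _ fun q => ?_)
      simp only [Pi.add_apply, Real.norm_eq_abs]
      have h1 := hC₀ q.2.2
      rw [abs_of_nonneg (by positivity : (0:ℝ) ≤ C₀ * (1 + ‖q.2.2‖ ^ 2))]
      calc |L q.2.2| ≤ C₀ * (1 + ‖q.2.2‖ ^ 2) := h1
        _ = C₀ * (1 + ‖q.2.2‖ ^ 2) := rfl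
    have hHθ : Integrable (fun q : E d × E d × E d => H q.2.1) θ := by
      have := (integrable_map_measure (f := fun q : E d × E d × E d => (q.1, q.2.1))
        (g := fun q : E d × E d => H q.2)
        (by rw [hθ1]; exact hHint.1) hm1.aemeasurable).mp (by rw [hθ1]; exact hHint)
      simpa [Function.comp_def] using this
    have hLeq : ∫ q, L q.2 ∂ξ = ∫ q, L q.2.2 ∂θ := by
      rw [← hθ2, integral_map hm2.aemeasurable
        (by rw [hθ2]; exact (hLcont.comp continuous_snd).aestronglyMeasurable)]
    have hHeq : ∫ q, H q.2 ∂γ = ∫ q, H q.2.1 ∂θ := by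
      rw [← hθ1, integral_map hm1.aemeasurable (by rw [hθ1]; exact hHint.1)]
    rw [hLeq, hHeq, ← integral_sub hAint hBint]
    refine integral_mono (hAint.sub hBint) hHθ fun q => ?_
    exact (hH q.2.1).1 ⟨q.2.2, rfl⟩
  -- Part 2: approximating sequence
  obtain ⟨v, hv⟩ := TopologicalSpace.exists_dense_seq (E d)
  set T : ℕ → E d → E d := selT L v with hT
  set f : ℕ → E d → ℝ := fsel L v with hf
  have hTmeas : ∀ n, Measurable (T n) := selT_measurable hLcont v
  have hfle : ∀ n p, f n p ≤ H p := fun n p => (hH p).1 ⟨T n p, rfl⟩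
  have htend : ∀ p, Tendsto (fun n => f n p) atTop (𝓝 (H p)) := by
    intro p
    refine tendsto_atTop_isLUB (fsel_mono L v p) ⟨?_, ?_⟩
    · rintro _ ⟨n, rfl⟩; exact hfle n p
    · intro b hb
      refine (hH p).2 ?_
      rintro _ ⟨w, rfl⟩
      by_contra hcon
      push_neg at hcon
      have hcont : Continuous fun u : E d => rinner (-u) p - L u :=
        (rinner_continuous.comp (continuous_neg.prodMk continuous_const)).sub hLcont
      have hopen : IsOpen {u : E d | b < rinner (-u) p - L u} :=
        isOpen_lt continuous_const hcont
      obtain ⟨k, hk⟩ := hv.exists_mem_open hopen ⟨w, hcon⟩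
      have h1 : rinner (-(v k)) p - L (v k) ≤ f k p := le_fsel L v le_rfl p
      have h2 : f k p ≤ b := hb ⟨k, rfl⟩
      exact absurd (lt_of_lt_of_le (lt_of_lt_of_le hk h1) h2) (lt_irrefl b)
  have hfint : ∀ n, Integrable (fun q : E d × E d => f n q.2) γ := by
    intro n
    obtain ⟨B, hB⟩ := selT_bound L v n
    have hB0 : 0 ≤ B := le_trans (norm_nonneg _) (hB 0)
    refine ((hn2γ.const_mul B).add (integrable_const (C₀ * (1 + B ^ 2)))).mono
      (((fval_measurable hLcont (hTmeas n)).comp measurable_snd).aestronglyMeasurable)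
      (ae_of_all _ fun q => ?_)
    simp only [Pi.add_apply, Real.norm_eq_abs]
    have h1 := abs_rinner_le (-(T n q.2)) q.2
    rw [norm_neg] at h1
    have h2 := hC₀ (T n q.2)
    have h3 : ‖T n q.2‖ ^ 2 ≤ B ^ 2 := by nlinarith [hB q.2, norm_nonneg (T n q.2)]
    have h4 : ‖T n q.2‖ * ‖q.2‖ ≤ B * ‖q.2‖ :=
      mul_le_mul_of_nonneg_right (hB _) (norm_nonneg _)
    rw [abs_of_nonneg (by positivity : (0:ℝ) ≤ B * ‖q.2‖ + C₀ * (1 + B ^ 2))]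
    have : f n q.2 = rinner (-(T n q.2)) q.2 - L (T n q.2) := rfl
    rw [this]
    have h5 : |rinner (-(T n q.2)) q.2 - L (T n q.2)|
        ≤ |rinner (-(T n q.2)) q.2| + |L (T n q.2)| := abs_sub _ _
    nlinarith
  have hmemS : ∀ n, (∫ q, f n q.2 ∂γ) ∈ S := by
    intro n
    obtain ⟨B, hB⟩ := selT_bound L v n
    have hB0 : 0 ≤ B := le_trans (norm_nonneg _) (hB 0)
    have hAint : Integrable (fun q : E d × E d => rinner (-(T n q.2)) q.2) γ := by
      refine (hn2γ.const_mul B).mono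
        ((rinner_continuous.measurable.comp
          ((((hTmeas n).comp measurable_snd).neg).prodMk measurable_snd)).aestronglyMeasurable)
        (ae_of_all _ fun q => ?_)
      simp only [Pi.add_apply, Real.norm_eq_abs]
      have h1 := abs_rinner_le (-(T n q.2)) q.2
      rw [norm_neg] at h1
      have h2 : ‖T n q.2‖ * ‖q.2‖ ≤ B * ‖q.2‖ :=
        mul_le_mul_of_nonneg_right (hB _) (norm_nonneg _)
      rw [abs_of_nonneg (by positivity : (0:ℝ) ≤ B * ‖q.2‖)]
      exact le_trans h1 h2
    have hBint : Integrable (fun q : E d × E d => L (T n q.2)) γ := by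
      refine (integrable_const (C₀ * (1 + B ^ 2))).mono
        ((hLcont.measurable.comp ((hTmeas n).comp measurable_snd)).aestronglyMeasurable)
        (ae_of_all _ fun q => ?_)
      simp only [Pi.add_apply, Real.norm_eq_abs]
      have h1 := hC₀ (T n q.2)
      have h2 : ‖T n q.2‖ ^ 2 ≤ B ^ 2 := by nlinarith [hB q.2, norm_nonneg (T n q.2)]
      rw [abs_of_nonneg (by positivity : (0:ℝ) ≤ C₀ * (1 + B ^ 2))]
      nlinarith
    set e2 : E d × E d → E d × E d := fun q => (q.1, T n q.2) with he2
    set e3 : E d × E d → E d × E d × E d := fun q => (q.1, q.2, T n q.2) with he3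
    have he2m : Measurable e2 := measurable_fst.prodMk ((hTmeas n).comp measurable_snd)
    have he3m : Measurable e3 :=
      measurable_fst.prodMk (measurable_snd.prodMk ((hTmeas n).comp measurable_snd))
    refine ⟨γ.map e2, ⟨?_, ?_, ?_⟩, γ.map e3, ⟨?_, ?_, ?_⟩, ?_⟩
    · exact Measure.isProbabilityMeasure_map he2m.aemeasurable
    · rw [Measure.map_map measurable_fst he2m]
      exact hγ.2.1
    · have haesm : AEStronglyMeasurable (fun p : E d × E d => ‖p.1‖ ^ 2 + ‖p.2‖ ^ 2)
          (γ.map e2) := by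
        apply Continuous.aestronglyMeasurable
        fun_prop
      refine (integrable_map_measure haesm he2m.aemeasurable).mpr ?_
      simp only [Function.comp_def]
      have hmeas : Measurable (fun q : E d × E d => ‖q.1‖ ^ 2 + ‖(e2 q).2‖ ^ 2) :=
        (((continuous_norm.comp continuous_fst).pow 2).measurable).add
          ((((hTmeas n).comp measurable_snd).norm).pow_const 2)
      refine (hsq1γ.add (integrable_const (B ^ 2))).mono hmeas.aestronglyMeasurable
        (ae_of_all _ fun q => ?_)
      simp only [Function.comp, Pi.add_apply, Real.norm_eq_abs]
      have h2 : ‖T n q.2‖ ^ 2 ≤ B ^ 2 := by nlinarith [hB q.2, norm_nonneg (T n q.2)]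
      rw [abs_of_nonneg (by positivity : (0:ℝ) ≤ ‖q.1‖ ^ 2 + ‖(e2 q).2‖ ^ 2),
        abs_of_nonneg (by positivity : (0:ℝ) ≤ ‖q.1‖ ^ 2 + B ^ 2)]
      simp only [he2]
      nlinarith [sq_nonneg ‖q.1‖]
    · exact Measure.isProbabilityMeasure_map he3m.aemeasurable
    · rw [Measure.map_map hm1 he3m]
      have hcomp : ((fun q : E d × E d × E d => (q.1, q.2.1)) ∘ e3) = id := rfl
      rw [hcomp, Measure.map_id]
    · rw [Measure.map_map hm2 he3m]
      rfl
    · have h1 : ∫ q, rinner (-q.2.2) q.2.1 ∂(γ.map e3)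
          = ∫ q, rinner (-(T n q.2)) q.2 ∂γ :=
        integral_map he3m.aemeasurable
          ((rinner_continuous.comp
            (((continuous_snd.comp continuous_snd).neg).prodMk
              (continuous_fst.comp continuous_snd))).aestronglyMeasurable)
      have h2 : ∫ q, L q.2 ∂(γ.map e2) = ∫ q, L (T n q.2) ∂γ :=
        integral_map he2m.aemeasurable (hLcont.comp continuous_snd).aestronglyMeasurable
      rw [h1, h2, ← integral_sub hAint hBint]
      rfl
  -- Part 3: conclusion
  have hlim : Tendsto (fun n => ∫ q, f n q.2 ∂γ) atTop (𝓝 (∫ q, H q.2 ∂γ)) :=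
    integral_tendsto_of_tendsto_of_monotone hfint hHint
      (ae_of_all _ fun q => fsel_mono L v q.2) (ae_of_all _ fun q => htend q.2)
  symm
  refine IsLUB.csSup_eq ⟨fun r hr => hub r hr, fun b hb => ?_⟩ ⟨_, hmemS 0⟩
  exact le_of_tendsto hlim (Eventually.of_forall fun n => hb (hmemS n))
end
end

section
/- Let L : ℝ^d → ℝ be convex, superlinear, with at most quadratic growth and satisfying L(z) ≥ c|z|² − C for constants c, C > 0, and L(0) = 0. Let 𝒢 : 𝒫₂(ℝ^d) → ℝ be lower semicontinuous and bounded below. For 0 ≤ t < T and μ ∈ 𝒫₂(ℝ^d) define 𝒱(t,μ) = inf over γ ∈ 𝒫_{2,μ}(ℝ^{2d}) of [𝒢(exp_μ(γ)) + (T−t)·ℒ((1/(T−t))·γ)], where ℒ(ξ) = ∫ L(v) dξ(x,v) and (λ·γ) := (π₁, λπ₂)_# γ. Then the dynamic programming principle holds: for all 0 ≤ t < s < T, 𝒱(t,μ) = inf over γ ∈ 𝒫_{2,μ}(ℝ^{2d}) of [𝒱(s, exp_μ(γ)) + (s−t)·ℒ((1/(s−t))·γ)]. -/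
open MeasureTheory Set Filter Metric
open scoped Topology ENNReal NNReal

noncomputable section

/-- The Hopf-Lax function. -/
def HL {d : ℕ} (G : Measure (E d) → ℝ) (L : E d → ℝ) (T t : ℝ) (μ : Measure (E d)) : ℝ :=
  sInf {r | ∃ γ ∈ plans μ, r = G (expMap γ) + (T - t) * Lag L (scal (T - t)⁻¹ γ)}

open ProbabilityTheory

namespace DPP
variable {d : ℕ}

lemma lcont {L : E d → ℝ} (hLconv : ConvexOn ℝ Set.univ L) : Continuous L := by
  rw [← continuousOn_univ]
  exact hLconv.continuousOn isOpen_univ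

lemma abs_bound {L : E d → ℝ} (hquad : ∃ C > 0, ∀ z : E d, L z ≤ C * (1 + ‖z‖ ^ 2))
    (hcoer : ∃ c > 0, ∃ C > 0, ∀ z : E d, c * ‖z‖ ^ 2 - C ≤ L z) :
    ∃ C > 0, ∀ z : E d, |L z| ≤ C * (1 + ‖z‖ ^ 2) := by
  obtain ⟨C1, hC1, h1⟩ := hquad
  obtain ⟨c, hc, C2, hC2, h2⟩ := hcoer
  refine ⟨max C1 C2, lt_max_of_lt_left hC1, fun z => ?_⟩
  rw [abs_le]
  constructor
  · have := h2 z
    have h3 : (0:ℝ) ≤ c * ‖z‖ ^ 2 := by positivity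
    have h4 : (0:ℝ) ≤ ‖z‖ ^ 2 := by positivity
    nlinarith [le_max_right C1 C2]
  · have := h1 z
    have h4 : (0:ℝ) ≤ ‖z‖ ^ 2 := by positivity
    nlinarith [le_max_left C1 C2]

lemma integrable_dom {α : Type*} [MeasurableSpace α] {γ : Measure α} [IsFiniteMeasure γ]
    {h : α → ℝ} (hi : Integrable h γ) (hh : ∀ p, 0 ≤ h p) {f : α → ℝ}
    (hf : AEStronglyMeasurable f γ) (c1 c2 : ℝ) (hb : ∀ p, |f p| ≤ c1 + c2 * h p) :
    Integrable f γ := by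
  refine ((integrable_const |c1|).add (hi.const_mul |c2|)).mono hf ?_
  filter_upwards with p
  have h1 := hb p; have h2 := hh p
  simp only [Real.norm_eq_abs]
  simp only [Pi.add_apply]
  have h3 : |(|c1| + |c2| * h p)| = |c1| + |c2| * h p := abs_of_nonneg (by positivity)
  rw [h3]
  nlinarith [le_abs_self c1, le_abs_self c2, abs_nonneg (f p)]

lemma cont_sq : Continuous (fun p : E d × E d => ‖p.1‖ ^ 2 + ‖p.2‖ ^ 2) := by fun_prop

/-- Transfer integrability of second-moment functions along a map. -/
lemma integrable_sq_map {α : Type*} [MeasurableSpace α] {γ : Measure α} {g : α → E d × E d}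
    (hg : Measurable g) (h : Integrable (fun p => ‖(g p).1‖ ^ 2 + ‖(g p).2‖ ^ 2) γ) :
    Integrable (fun p : E d × E d => ‖p.1‖ ^ 2 + ‖p.2‖ ^ 2) (γ.map g) :=
  (integrable_map_measure cont_sq.aestronglyMeasurable hg.aemeasurable).mpr h

lemma expMap_memP2 {μ : Measure (E d)} {γ : Measure (E d × E d)} (hγ : γ ∈ plans μ) :
    expMap γ ∈ P2 d := by
  obtain ⟨hp, _, hint⟩ := hγ
  haveI := hp
  refine ⟨Measure.isProbabilityMeasure_map (f := fun p : E d × E d => p.1 + p.2) (by fun_prop), ?_⟩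
  rw [expMap]
  refine (integrable_map_measure ((continuous_norm.pow 2).aestronglyMeasurable) (by fun_prop)).mpr ?_
  refine integrable_dom hint (fun p => by positivity)
    (Continuous.aestronglyMeasurable (by fun_prop)) 0 2 (fun p => ?_)
  have h1 := norm_add_le p.1 p.2
  have h2 : |‖p.1 + p.2‖ ^ 2| = ‖p.1 + p.2‖ ^ 2 := abs_of_nonneg (by positivity)
  simp only [Function.comp_apply, Pi.pow_apply]
  rw [h2]
  nlinarith [norm_nonneg p.1, norm_nonneg p.2, norm_nonneg (p.1 + p.2), sq_nonneg (‖p.1‖ - ‖p.2‖)]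

lemma scal_mem_plans {μ : Measure (E d)} {γ : Measure (E d × E d)} (hγ : γ ∈ plans μ) (a : ℝ) :
    scal a γ ∈ plans μ := by
  obtain ⟨hp, hfst, hint⟩ := hγ
  haveI := hp
  refine ⟨Measure.isProbabilityMeasure_map (Measurable.aemeasurable (by fun_prop)), ?_, ?_⟩
  · rw [scal, Measure.map_map (by fun_prop) (by fun_prop)]
    exact hfst
  · refine integrable_sq_map (by fun_prop) ?_
    refine integrable_dom hint (fun p => by positivity)
      (Continuous.aestronglyMeasurable (by fun_prop)) 0 (1 + a ^ 2) (fun p => ?_)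
    have h2 : ‖a • p.2‖ = |a| * ‖p.2‖ := by rw [norm_smul, Real.norm_eq_abs]
    have h3 : |‖p.1‖ ^ 2 + ‖a • p.2‖ ^ 2| = ‖p.1‖ ^ 2 + ‖a • p.2‖ ^ 2 :=
      abs_of_nonneg (by positivity)
    rw [h3, h2]
    have := sq_abs a
    nlinarith [norm_nonneg p.1, norm_nonneg p.2, sq_nonneg a, sq_nonneg ‖p.2‖, sq_nonneg ‖p.1‖]

lemma zero_plan_mem {ν : Measure (E d)} (hν : ν ∈ P2 d) :
    ν.map (fun y => (y, (0 : E d))) ∈ plans ν := by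
  obtain ⟨hp, hint⟩ := hν
  haveI := hp
  refine ⟨Measure.isProbabilityMeasure_map (Measurable.aemeasurable (by fun_prop)), ?_, ?_⟩
  · rw [Measure.map_map (by fun_prop) (by fun_prop)]
    simp [Function.comp_def]
  · refine integrable_sq_map (by fun_prop) ?_
    simpa using hint

lemma Lag_scal {L : E d → ℝ} (hLc : Continuous L) (γ : Measure (E d × E d)) (a : ℝ) :
    Lag L (scal a γ) = ∫ p, L (a • p.2) ∂γ := by
  rw [Lag, scal, integral_map (by fun_prop) (Continuous.aestronglyMeasurable (by fun_prop))]

lemma scal_scal (γ : Measure (E d × E d)) (a b : ℝ) : scal a (scal b γ) = scal (a * b) γ := by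
  rw [scal, scal, scal, Measure.map_map (by fun_prop) (by fun_prop)]
  congr 1
  funext p
  simp [Function.comp_def, smul_smul]

lemma integrable_Lcomp {L : E d → ℝ} {C : ℝ} (hC : 0 < C)
    (hb : ∀ z : E d, |L z| ≤ C * (1 + ‖z‖ ^ 2)) (hLc : Continuous L)
    {γ : Measure (E d × E d)} [IsFiniteMeasure γ]
    (hint : Integrable (fun p => ‖p.1‖ ^ 2 + ‖p.2‖ ^ 2) γ) (a : ℝ) :
    Integrable (fun p : E d × E d => L (a • p.2)) γ := by
  refine integrable_dom hint (fun p => by positivity)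
    (Continuous.aestronglyMeasurable (by fun_prop)) C (C * a ^ 2) (fun p => ?_)
  have h1 := hb (a • p.2)
  have h2 : ‖a • p.2‖ = |a| * ‖p.2‖ := by rw [norm_smul, Real.norm_eq_abs]
  rw [h2] at h1
  have h4 : (|a| * ‖p.2‖) ^ 2 = a ^ 2 * ‖p.2‖ ^ 2 := by rw [mul_pow, sq_abs]
  rw [h4] at h1
  nlinarith [norm_nonneg p.1, norm_nonneg p.2, mul_nonneg (mul_nonneg hC.le (sq_nonneg a)) (sq_nonneg ‖p.1‖)]


lemma conv_ineq {L : E d → ℝ} (hLconv : ConvexOn ℝ Set.univ L) {t s T : ℝ}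
    (hts : t < s) (hsT : s < T) (v w : E d) :
    (T - t) * L ((T - t)⁻¹ • (v + w)) ≤
      (s - t) * L ((s - t)⁻¹ • v) + (T - s) * L ((T - s)⁻¹ • w) := by
  have hst : (0:ℝ) < s - t := by linarith
  have hTs : (0:ℝ) < T - s := by linarith
  have hTt : (0:ℝ) < T - t := by linarith
  set a : ℝ := (s - t) / (T - t) with ha_def
  set b : ℝ := (T - s) / (T - t) with hb_def
  have ha : 0 ≤ a := by positivity
  have hb : 0 ≤ b := by positivity
  have hab : a + b = 1 := by rw [ha_def, hb_def]; field_simp; ring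
  have key := hLconv.2 (Set.mem_univ ((s - t)⁻¹ • v)) (Set.mem_univ ((T - s)⁻¹ • w)) ha hb hab
  simp only [smul_eq_mul] at key
  have h1 : a • (s - t)⁻¹ • v + b • (T - s)⁻¹ • w = (T - t)⁻¹ • (v + w) := by
    rw [smul_smul, smul_smul, smul_add]
    congr 2
    · rw [ha_def]
      field_simp
      try ring
    · rw [hb_def]
      field_simp
      try ring
  rw [h1] at key
  have h2 : (T - t) * a = s - t := by rw [ha_def]; field_simp
  have h3 : (T - t) * b = T - s := by rw [hb_def]; field_simp
  have := mul_le_mul_of_nonneg_left key hTt.le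
  calc (T - t) * L ((T - t)⁻¹ • (v + w)) ≤
      (T - t) * (a * L ((s - t)⁻¹ • v) + b * L ((T - s)⁻¹ • w)) := this
    _ = (T - t) * a * L ((s - t)⁻¹ • v) + (T - t) * b * L ((T - s)⁻¹ • w) := by ring
    _ = (s - t) * L ((s - t)⁻¹ • v) + (T - s) * L ((T - s)⁻¹ • w) := by rw [h2, h3]

lemma Lag_scal_ge {L : E d → ℝ} {C C2 : ℝ} (hC : 0 < C)
    (hb : ∀ z : E d, |L z| ≤ C * (1 + ‖z‖ ^ 2)) (hLc : Continuous L)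
    (hC2 : 0 < C2) (hlb : ∀ z : E d, -C2 ≤ L z)
    {γ : Measure (E d × E d)} [IsProbabilityMeasure γ]
    (hint : Integrable (fun p => ‖p.1‖ ^ 2 + ‖p.2‖ ^ 2) γ) (a : ℝ) :
    -C2 ≤ Lag L (scal a γ) := by
  rw [Lag_scal hLc]
  have h1 : ∫ _p, (-C2) ∂γ = -C2 := by simp
  rw [← h1]
  exact integral_mono (integrable_const _) (integrable_Lcomp hC hb hLc hint a)
    (fun p => hlb (a • p.2))

lemma glue_marginal (γ : Measure (E d × E d)) [IsProbabilityMeasure γ]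
    (σ : Measure (E d × E d)) [IsProbabilityMeasure σ]
    (hfst : σ.map Prod.fst = γ.map (fun p => p.1 + p.2)) :
    (γ ⊗ₘ (σ.condKernel.comap (fun p : E d × E d => p.1 + p.2) (by fun_prop))).map
      (fun q : (E d × E d) × E d => (q.1.1 + q.1.2, q.2)) = σ := by
  have hfm : Measurable (fun p : E d × E d => p.1 + p.2) := by fun_prop
  have hgm : Measurable (fun q : (E d × E d) × E d => (q.1.1 + q.1.2, q.2)) := by fun_prop
  ext s hs
  rw [Measure.map_apply hgm hs, Measure.compProd_apply (hgm hs)]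
  have h1 : ∀ p : E d × E d,
      (σ.condKernel.comap (fun p : E d × E d => p.1 + p.2) hfm) p
        (Prod.mk p ⁻¹' ((fun q : (E d × E d) × E d => (q.1.1 + q.1.2, q.2)) ⁻¹' s))
      = σ.condKernel (p.1 + p.2) (Prod.mk (p.1 + p.2) ⁻¹' s) := by
    intro p
    rw [Kernel.comap_apply]
    rfl
  simp_rw [h1]
  rw [← lintegral_map (Kernel.measurable_kernel_prodMk_left hs) hfm, ← hfst]
  have h2 : σ.map Prod.fst = σ.fst := rfl
  rw [h2, ← Measure.compProd_apply hs, σ.disintegrate σ.condKernel]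


lemma feasible_nonempty {G : Measure (E d) → ℝ} {L : E d → ℝ} {T u : ℝ} {ν : Measure (E d)}
    (hν : ν ∈ P2 d) :
    {r | ∃ γ ∈ plans ν, r = G (expMap γ) + (T - u) * Lag L (scal (T - u)⁻¹ γ)}.Nonempty :=
  ⟨_, ν.map (fun y => (y, 0)), zero_plan_mem hν, rfl⟩

lemma lb_elem {G : Measure (E d) → ℝ} {L : E d → ℝ} {m C C2 : ℝ} (hC : 0 < C)
    (hb : ∀ z : E d, |L z| ≤ C * (1 + ‖z‖ ^ 2)) (hLc : Continuous L) (hC2 : 0 < C2)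
    (hlb : ∀ z : E d, -C2 ≤ L z) (hG : ∀ μ ∈ P2 d, m ≤ G μ) {T u : ℝ} (hu : u ≤ T)
    {ν : Measure (E d)} {r : ℝ}
    (hr : r ∈ {r | ∃ γ ∈ plans ν, r = G (expMap γ) + (T - u) * Lag L (scal (T - u)⁻¹ γ)}) :
    m - (T - u) * C2 ≤ r := by
  obtain ⟨γ, hγ, rfl⟩ := hr
  haveI := hγ.1
  have h1 := hG _ (expMap_memP2 hγ)
  have h2 := Lag_scal_ge hC hb hLc hC2 hlb hγ.2.2 (T - u)⁻¹
  have h3 := mul_le_mul_of_nonneg_left h2 (sub_nonneg.2 hu)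
  linarith

end DPP

set_option maxHeartbeats 2000000 in
theorem hopf_lax_DPP {d : ℕ} (L : E d → ℝ) (G : Measure (E d) → ℝ) (T : ℝ)
    (hLconv : ConvexOn ℝ Set.univ L) (hL0 : L 0 = 0)
    (hsuper : ∀ M : ℝ, ∃ R : ℝ, ∀ z : E d, R ≤ ‖z‖ → M * ‖z‖ ≤ L z)
    (hquad : ∃ C > 0, ∀ z : E d, L z ≤ C * (1 + ‖z‖ ^ 2))
    (hcoer : ∃ c > 0, ∃ C > 0, ∀ z : E d, c * ‖z‖ ^ 2 - C ≤ L z)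
    (hGlb : ∃ m : ℝ, ∀ μ ∈ P2 d, m ≤ G μ)
    (hGlsc : ∀ ρ ∈ P2 d, ∀ seq : ℕ → Measure (E d), (∀ n, seq n ∈ P2 d) →
      Tendsto (fun n => W2 (seq n) ρ) atTop (𝓝 0) →
      G ρ ≤ Filter.liminf (fun n => G (seq n)) atTop)
    (t s : ℝ) (ht : 0 ≤ t) (hts : t < s) (hsT : s < T)
    (μ : Measure (E d)) (hμ : μ ∈ P2 d) :
    HL G L T t μ =
      sInf {r | ∃ γ ∈ plans μ,
        r = HL G L T s (expMap γ) + (s - t) * Lag L (scal (s - t)⁻¹ γ)} := by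
  have hTt : (0:ℝ) < T - t := by linarith
  have hst : (0:ℝ) < s - t := by linarith
  have hTs : (0:ℝ) < T - s := by linarith
  have hLc : Continuous L := DPP.lcont hLconv
  obtain ⟨C, hC, hb⟩ := DPP.abs_bound hquad hcoer
  obtain ⟨c0, hc0, C2, hC2, hlb0⟩ := hcoer
  have hlb : ∀ z : E d, -C2 ≤ L z := fun z =>
    le_trans (by nlinarith [sq_nonneg ‖z‖, mul_nonneg hc0.le (sq_nonneg ‖z‖)]) (hlb0 z)
  obtain ⟨m, hG⟩ := hGlb
  set S := {r | ∃ γ ∈ plans μ,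
      r = HL G L T s (expMap γ) + (s - t) * Lag L (scal (s - t)⁻¹ γ)} with hSdef
  have hlbt : ∀ r ∈ {r | ∃ γ ∈ plans μ,
      r = G (expMap γ) + (T - t) * Lag L (scal (T - t)⁻¹ γ)}, m - (T - t) * C2 ≤ r :=
    fun r hr => DPP.lb_elem hC hb hLc hC2 hlb hG (by linarith) hr
  have hbddt : BddBelow {r | ∃ γ ∈ plans μ,
      r = G (expMap γ) + (T - t) * Lag L (scal (T - t)⁻¹ γ)} := ⟨_, hlbt⟩
  have hbddAs : ∀ ν : Measure (E d), BddBelow {r | ∃ γ ∈ plans ν,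
      r = G (expMap γ) + (T - s) * Lag L (scal (T - s)⁻¹ γ)} :=
    fun ν => ⟨m - (T - s) * C2, fun r hr => DPP.lb_elem hC hb hLc hC2 hlb hG (by linarith) hr⟩
  have hHLs_ge : ∀ ν ∈ P2 d, m - (T - s) * C2 ≤ HL G L T s ν := fun ν hν =>
    le_csInf (DPP.feasible_nonempty hν) (fun r hr => DPP.lb_elem hC hb hLc hC2 hlb hG (by linarith) hr)
  have hSne : S.Nonempty := ⟨_, μ.map (fun y => (y, 0)), DPP.zero_plan_mem hμ, rfl⟩
  have hSbdd : BddBelow S := by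
    refine ⟨m - (T - s) * C2 + (s - t) * (-C2), ?_⟩
    rintro r ⟨γ, hγ, rfl⟩
    haveI := hγ.1
    have h1 := hHLs_ge _ (DPP.expMap_memP2 hγ)
    have h2 := DPP.Lag_scal_ge hC hb hLc hC2 hlb hγ.2.2 (s - t)⁻¹
    have h3 := mul_le_mul_of_nonneg_left h2 hst.le
    linarith
  apply le_antisymm
  · refine le_csInf hSne ?_
    rintro r ⟨γ, hγ, rfl⟩
    haveI hγp := hγ.1
    have hν : expMap γ ∈ P2 d := DPP.expMap_memP2 hγ
    rw [← sub_le_iff_le_add]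
    refine le_csInf (DPP.feasible_nonempty hν) ?_
    rintro r' ⟨σ, hσ, rfl⟩
    rw [sub_le_iff_le_add]
    haveI hσp := hσ.1
    have hfm : Measurable (fun p : E d × E d => p.1 + p.2) := by fun_prop
    set θ := γ ⊗ₘ (σ.condKernel.comap (fun p : E d × E d => p.1 + p.2) hfm) with hθdef
    haveI : IsProbabilityMeasure θ := by rw [hθdef]; infer_instance
    have key1 : θ.map (fun q : (E d × E d) × E d => (q.1.1 + q.1.2, q.2)) = σ :=
      DPP.glue_marginal γ σ hσ.2.1
    have key2 : θ.map Prod.fst = γ := by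
      rw [hθdef]
      have h := Measure.fst_compProd γ (σ.condKernel.comap (fun p : E d × E d => p.1 + p.2) hfm)
      simpa [Measure.fst] using h
    have hmint : Integrable (fun q : (E d × E d) × E d => ‖q.1.1‖ ^ 2 + ‖q.1.2‖ ^ 2) θ := by
      have h := hγ.2.2
      rw [← key2] at h
      have h2 := (integrable_map_measure DPP.cont_sq.aestronglyMeasurable
        measurable_fst.aemeasurable).mp h
      simpa [Function.comp_def] using h2
    have hσint : Integrable (fun q : (E d × E d) × E d => ‖q.1.1 + q.1.2‖ ^ 2 + ‖q.2‖ ^ 2) θ := by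
      have h := hσ.2.2
      rw [← key1] at h
      have h2 := (integrable_map_measure DPP.cont_sq.aestronglyMeasurable
        (Measurable.aemeasurable (by fun_prop))).mp h
      simpa [Function.comp_def] using h2
    have hHθ : Integrable (fun q : (E d × E d) × E d =>
        ‖q.1.1‖ ^ 2 + ‖q.1.2‖ ^ 2 + ‖q.2‖ ^ 2) θ := by
      have h2 : Integrable (fun q : (E d × E d) × E d => ‖q.2‖ ^ 2) θ := by
        refine DPP.integrable_dom hσint
          (fun q => by positivity) (Continuous.aestronglyMeasurable (by fun_prop)) 0 1
          (fun q => ?_)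
        have h3 : |‖q.2‖ ^ 2| = ‖q.2‖ ^ 2 := abs_of_nonneg (by positivity)
        nlinarith [norm_nonneg (q.1.1 + q.1.2), sq_nonneg ‖q.1.1 + q.1.2‖]
      exact hmint.add h2
    set γ' := θ.map (fun q : (E d × E d) × E d => (q.1.1, q.1.2 + q.2)) with hγ'def
    have hγ'm : Measurable (fun q : (E d × E d) × E d => (q.1.1, q.1.2 + q.2)) := by fun_prop
    have hγ'p : γ' ∈ plans μ := by
      refine ⟨Measure.isProbabilityMeasure_map hγ'm.aemeasurable, ?_, ?_⟩
      · rw [hγ'def, Measure.map_map measurable_fst hγ'm]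
        have he : (Prod.fst ∘ fun q : (E d × E d) × E d => (q.1.1, q.1.2 + q.2)) =
            (Prod.fst ∘ (Prod.fst : (E d × E d) × E d → E d × E d)) := rfl
        rw [he, ← Measure.map_map measurable_fst measurable_fst, key2, hγ.2.1]
      · refine DPP.integrable_sq_map hγ'm ?_
        refine DPP.integrable_dom hHθ (fun q => by positivity)
          (Continuous.aestronglyMeasurable (by fun_prop)) 0 2 (fun q => ?_)
        have h1 := norm_add_le q.1.2 q.2
        have h2 : |‖q.1.1‖ ^ 2 + ‖q.1.2 + q.2‖ ^ 2| = ‖q.1.1‖ ^ 2 + ‖q.1.2 + q.2‖ ^ 2 :=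
          abs_of_nonneg (by positivity)
        rw [h2]
        nlinarith [norm_nonneg q.1.2, norm_nonneg q.2, sq_nonneg (‖q.1.2‖ - ‖q.2‖),
          norm_nonneg (q.1.2 + q.2), sq_nonneg ‖q.1.1‖]
    have step1 : HL G L T t μ ≤ G (expMap γ') + (T - t) * Lag L (scal (T - t)⁻¹ γ') :=
      csInf_le hbddt ⟨γ', hγ'p, rfl⟩
    have hexp : expMap γ' = expMap σ := by
      rw [hγ'def, expMap, expMap, ← key1, Measure.map_map hfm hγ'm,
        Measure.map_map hfm
          (show Measurable fun q : (E d × E d) × E d => (q.1.1 + q.1.2, q.2) by fun_prop)]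
      congr 1
      funext q
      simp [Function.comp_def, add_assoc]
    have hLγ' : Lag L (scal (T - t)⁻¹ γ') = ∫ q, L ((T - t)⁻¹ • (q.1.2 + q.2)) ∂θ := by
      rw [DPP.Lag_scal hLc, hγ'def,
        integral_map hγ'm.aemeasurable (Continuous.aestronglyMeasurable (by fun_prop))]
    have hLγ : Lag L (scal (s - t)⁻¹ γ) = ∫ q, L ((s - t)⁻¹ • q.1.2) ∂θ := by
      rw [DPP.Lag_scal hLc, ← key2,
        integral_map measurable_fst.aemeasurable (Continuous.aestronglyMeasurable (by fun_prop))]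
    have hLσ : Lag L (scal (T - s)⁻¹ σ) = ∫ q, L ((T - s)⁻¹ • q.2) ∂θ := by
      rw [DPP.Lag_scal hLc, ← key1,
        integral_map (Measurable.aemeasurable (by fun_prop))
          (Continuous.aestronglyMeasurable (by fun_prop))]
    have intgen : ∀ (a : ℝ) (g : (E d × E d) × E d → E d), Continuous g →
        (∀ q : (E d × E d) × E d, ‖g q‖ ^ 2 ≤ 2 * (‖q.1.1‖ ^ 2 + ‖q.1.2‖ ^ 2 + ‖q.2‖ ^ 2)) →
        Integrable (fun q => L (a • g q)) θ := by
      intro a g hg hgb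
      refine DPP.integrable_dom hHθ (fun q => by positivity)
        ((hLc.comp (hg.const_smul a)).aestronglyMeasurable) C (2 * C * a ^ 2) (fun q => ?_)
      have h1 := hb (a • g q)
      have h2 : ‖a • g q‖ ^ 2 = a ^ 2 * ‖g q‖ ^ 2 := by
        rw [norm_smul, mul_pow, Real.norm_eq_abs, sq_abs]
      rw [h2] at h1
      have h4 := mul_le_mul_of_nonneg_left (mul_le_mul_of_nonneg_left (hgb q) (sq_nonneg a)) hC.le
      nlinarith [h4]
    have hb1 : ∀ q : (E d × E d) × E d,
        ‖q.1.2‖ ^ 2 ≤ 2 * (‖q.1.1‖ ^ 2 + ‖q.1.2‖ ^ 2 + ‖q.2‖ ^ 2) := fun q => by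
      nlinarith [sq_nonneg ‖q.1.1‖, sq_nonneg ‖q.2‖, sq_nonneg ‖q.1.2‖]
    have hb2 : ∀ q : (E d × E d) × E d,
        ‖q.2‖ ^ 2 ≤ 2 * (‖q.1.1‖ ^ 2 + ‖q.1.2‖ ^ 2 + ‖q.2‖ ^ 2) := fun q => by
      nlinarith [sq_nonneg ‖q.1.1‖, sq_nonneg ‖q.2‖, sq_nonneg ‖q.1.2‖]
    have hb3 : ∀ q : (E d × E d) × E d,
        ‖q.1.2 + q.2‖ ^ 2 ≤ 2 * (‖q.1.1‖ ^ 2 + ‖q.1.2‖ ^ 2 + ‖q.2‖ ^ 2) := fun q => by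
      have h1 := norm_add_le q.1.2 q.2
      nlinarith [norm_nonneg q.1.2, norm_nonneg q.2, norm_nonneg (q.1.2 + q.2),
        sq_nonneg (‖q.1.2‖ - ‖q.2‖), sq_nonneg ‖q.1.1‖]
    have intL1 : Integrable (fun q : (E d × E d) × E d => L ((s - t)⁻¹ • q.1.2)) θ :=
      intgen (s - t)⁻¹ (fun q => q.1.2) (by fun_prop) hb1
    have intL2 : Integrable (fun q : (E d × E d) × E d => L ((T - s)⁻¹ • q.2)) θ :=
      intgen (T - s)⁻¹ (fun q => q.2) (by fun_prop) hb2
    have intL3 : Integrable (fun q : (E d × E d) × E d => L ((T - t)⁻¹ • (q.1.2 + q.2))) θ :=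
      intgen (T - t)⁻¹ (fun q => q.1.2 + q.2) (by fun_prop) hb3
    have pt : ∀ q : (E d × E d) × E d,
        (T - t) * L ((T - t)⁻¹ • (q.1.2 + q.2)) ≤
          (s - t) * L ((s - t)⁻¹ • q.1.2) + (T - s) * L ((T - s)⁻¹ • q.2) :=
      fun q => DPP.conv_ineq hLconv hts hsT q.1.2 q.2
    have keyineq : (T - t) * (∫ q, L ((T - t)⁻¹ • (q.1.2 + q.2)) ∂θ) ≤
        (s - t) * (∫ q, L ((s - t)⁻¹ • q.1.2) ∂θ) + (T - s) * (∫ q, L ((T - s)⁻¹ • q.2) ∂θ) := by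
      have hmono := integral_mono (intL3.const_mul (T - t))
        ((intL1.const_mul (s - t)).add (intL2.const_mul (T - s))) pt
      simp only [Pi.add_apply] at hmono
      rw [integral_add (intL1.const_mul _) (intL2.const_mul _), integral_const_mul _,
        integral_const_mul _, integral_const_mul _] at hmono
      exact hmono
    calc HL G L T t μ ≤ G (expMap γ') + (T - t) * Lag L (scal (T - t)⁻¹ γ') := step1
      _ = G (expMap σ) + (T - t) * ∫ q, L ((T - t)⁻¹ • (q.1.2 + q.2)) ∂θ := by rw [hexp, hLγ']
      _ ≤ G (expMap σ) + ((s - t) * (∫ q, L ((s - t)⁻¹ • q.1.2) ∂θ) +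
          (T - s) * (∫ q, L ((T - s)⁻¹ • q.2) ∂θ)) := by linarith
      _ = G (expMap σ) + (T - s) * Lag L (scal (T - s)⁻¹ σ) +
          (s - t) * Lag L (scal (s - t)⁻¹ γ) := by rw [hLγ, hLσ]; ring
  · refine le_csInf (DPP.feasible_nonempty hμ) ?_
    rintro r ⟨γ, hγ, rfl⟩
    haveI := hγ.1
    set lam : ℝ := (s - t) / (T - t) with hlamdef
    have hlam1 : (s - t)⁻¹ * lam = (T - t)⁻¹ := by
      rw [hlamdef]; field_simp
    have hlam2 : (T - s)⁻¹ * (1 - lam) = (T - t)⁻¹ := by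
      rw [hlamdef]; field_simp; try ring
    have hγ₁ : scal lam γ ∈ plans μ := DPP.scal_mem_plans hγ lam
    have hν : expMap (scal lam γ) ∈ P2 d := DPP.expMap_memP2 hγ₁
    have hgm : Measurable (fun p : E d × E d => (p.1 + lam • p.2, (1 - lam) • p.2)) := by fun_prop
    set σ := γ.map (fun p : E d × E d => (p.1 + lam • p.2, (1 - lam) • p.2)) with hσdef
    have hexpν : expMap (scal lam γ) = γ.map (fun p : E d × E d => p.1 + lam • p.2) := by
      rw [expMap, scal, Measure.map_map (by fun_prop) (by fun_prop)]
      rfl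
    have hσ : σ ∈ plans (expMap (scal lam γ)) := by
      refine ⟨Measure.isProbabilityMeasure_map hgm.aemeasurable, ?_, ?_⟩
      · rw [hσdef, Measure.map_map measurable_fst hgm, hexpν]
        rfl
      · refine DPP.integrable_sq_map hgm ?_
        refine DPP.integrable_dom hγ.2.2 (fun p => by positivity)
          (Continuous.aestronglyMeasurable (by fun_prop)) 0 (2 + 2 * lam ^ 2 + (1 - lam) ^ 2)
          (fun p => ?_)
        have h1 := norm_add_le p.1 (lam • p.2)
        have h2 : ‖lam • p.2‖ = |lam| * ‖p.2‖ := by rw [norm_smul, Real.norm_eq_abs]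
        have h3 : ‖(1 - lam) • p.2‖ = |1 - lam| * ‖p.2‖ := by rw [norm_smul, Real.norm_eq_abs]
        have h4 : |‖p.1 + lam • p.2‖ ^ 2 + ‖(1 - lam) • p.2‖ ^ 2| =
            ‖p.1 + lam • p.2‖ ^ 2 + ‖(1 - lam) • p.2‖ ^ 2 := abs_of_nonneg (by positivity)
        rw [h4, h3]
        have h5 : (|1 - lam| * ‖p.2‖) ^ 2 = (1 - lam) ^ 2 * ‖p.2‖ ^ 2 := by
          rw [mul_pow, sq_abs]
        rw [h5]
        have h6 : ‖p.1 + lam • p.2‖ ^ 2 ≤ 2 * ‖p.1‖ ^ 2 + 2 * lam ^ 2 * ‖p.2‖ ^ 2 := by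
          rw [h2] at h1
          nlinarith [norm_nonneg p.1, norm_nonneg p.2, norm_nonneg (p.1 + lam • p.2),
            sq_nonneg (‖p.1‖ - |lam| * ‖p.2‖), sq_abs lam]
        nlinarith [sq_nonneg ‖p.1‖, sq_nonneg ‖p.2‖, sq_nonneg lam, sq_nonneg (1 - lam)]
    have step1 : sInf S ≤ HL G L T s (expMap (scal lam γ)) +
        (s - t) * Lag L (scal (s - t)⁻¹ (scal lam γ)) :=
      csInf_le hSbdd ⟨scal lam γ, hγ₁, rfl⟩
    have step2 : HL G L T s (expMap (scal lam γ)) ≤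
        G (expMap σ) + (T - s) * Lag L (scal (T - s)⁻¹ σ) :=
      csInf_le (hbddAs _) ⟨σ, hσ, rfl⟩
    have hexp2 : expMap σ = expMap γ := by
      rw [hσdef, expMap, expMap, Measure.map_map (by fun_prop) hgm]
      congr 1
      funext p
      show p.1 + lam • p.2 + (1 - lam) • p.2 = p.1 + p.2
      rw [add_assoc, ← add_smul]
      norm_num
    have hl1 : Lag L (scal (s - t)⁻¹ (scal lam γ)) = Lag L (scal (T - t)⁻¹ γ) := by
      rw [DPP.scal_scal, hlam1]
    have hl2 : Lag L (scal (T - s)⁻¹ σ) = Lag L (scal (T - t)⁻¹ γ) := by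
      rw [DPP.Lag_scal hLc, DPP.Lag_scal hLc, hσdef,
        integral_map hgm.aemeasurable (Continuous.aestronglyMeasurable (by fun_prop))]
      congr 1
      funext p
      show L ((T - s)⁻¹ • (1 - lam) • p.2) = L ((T - t)⁻¹ • p.2)
      rw [smul_smul, hlam2]
    rw [hexp2, hl2] at step2
    rw [hl1] at step1
    have hr : (T - s) * Lag L (scal (T - t)⁻¹ γ) + (s - t) * Lag L (scal (T - t)⁻¹ γ) =
        (T - t) * Lag L (scal (T - t)⁻¹ γ) := by ring
    linarith
end
end

section
/- Under the hypotheses of the Hopf–Lax formula (L convex, superlinear, coercive with L(z) ≥ c|z|² − C, L(0) = 0, and 𝒢 : 𝒫₂(ℝ^d) → ℝ Lipschitz with respect to W₂), the Hopf–Lax function 𝒱(t,μ) = inf_γ [𝒢(exp_μ(γ)) + (T−t) ℒ(γ/(T−t))] satisfies, for each fixed t ∈ (0,T), the Lipschitz bound Lip(𝒱(t,·); W₂) ≤ Lip(𝒢; W₂). -/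
open MeasureTheory Set Filter Metric ProbabilityTheory
open scoped Topology ENNReal NNReal

noncomputable section

section Aux
variable {d : ℕ}

lemma meas_addE : Measurable (fun p : E d × E d => p.1 + p.2) :=
  measurable_fst.add measurable_snd

lemma contE1 : Continuous (fun p : E d × E d => ‖p.1 - p.2‖ ^ 2) :=
  ((continuous_fst.sub continuous_snd).norm.pow 2)

lemma w2_le {μ ν : Measure (E d)} (γ : Measure (E d × E d)) (h1 : IsProbabilityMeasure γ)
    (h2 : IsCoupling γ μ ν) : W2 μ ν ≤ Real.sqrt (∫ p, ‖p.1 - p.2‖ ^ 2 ∂γ) := by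
  apply csInf_le
  · exact ⟨0, by rintro x ⟨γ', _, _, rfl⟩; exact Real.sqrt_nonneg _⟩
  · exact ⟨γ, h1, h2, rfl⟩

lemma w2_set_nonempty {μ ν : Measure (E d)} (hμ : IsProbabilityMeasure μ)
    (hν : IsProbabilityMeasure ν) :
    {c | ∃ γ : Measure (E d × E d), IsProbabilityMeasure γ ∧ IsCoupling γ μ ν ∧
      c = Real.sqrt (∫ p, ‖p.1 - p.2‖ ^ 2 ∂γ)}.Nonempty := by
  refine ⟨_, μ.prod ν, inferInstance, ⟨?_, ?_⟩, rfl⟩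
  · have := Measure.fst_prod (μ := μ) (ν := ν); exact this
  · have := Measure.snd_prod (μ := μ) (ν := ν); exact this

lemma w2_set_subset (μ ν : Measure (E d)) :
    {c | ∃ γ : Measure (E d × E d), IsProbabilityMeasure γ ∧ IsCoupling γ μ ν ∧
      c = Real.sqrt (∫ p, ‖p.1 - p.2‖ ^ 2 ∂γ)} ⊆
    {c | ∃ γ : Measure (E d × E d), IsProbabilityMeasure γ ∧ IsCoupling γ ν μ ∧
      c = Real.sqrt (∫ p, ‖p.1 - p.2‖ ^ 2 ∂γ)} := by
  rintro c ⟨γ, hp, ⟨h1, h2⟩, rfl⟩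
  haveI := hp
  refine ⟨γ.map Prod.swap, Measure.isProbabilityMeasure_map measurable_swap.aemeasurable, ⟨?_, ?_⟩, ?_⟩
  · rw [Measure.map_map measurable_fst measurable_swap]; exact h2
  · rw [Measure.map_map measurable_snd measurable_swap]; exact h1
  · rw [integral_map measurable_swap.aemeasurable contE1.aestronglyMeasurable]
    congr 1
    exact integral_congr_ae (Eventually.of_forall fun p => by
      simp only [Prod.swap]; rw [norm_sub_rev])

lemma w2_symm (μ ν : Measure (E d)) : W2 μ ν = W2 ν μ :=
  congrArg sInf (Subset.antisymm (w2_set_subset μ ν) (w2_set_subset ν μ))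

lemma integral_snd_congr {ρ₁ ρ₂ : Measure (E d × E d)} (h : ρ₁.map Prod.snd = ρ₂.map Prod.snd)
    {f : E d → ℝ} (hf : Continuous f) : ∫ p, f p.2 ∂ρ₁ = ∫ p, f p.2 ∂ρ₂ := by
  have h1 := integral_map (μ := ρ₁) measurable_snd.aemeasurable
    (f := f) hf.aestronglyMeasurable
  have h2 := integral_map (μ := ρ₂) measurable_snd.aemeasurable
    (f := f) hf.aestronglyMeasurable
  rw [← h1, ← h2, h]

lemma lag_scal (L : E d → ℝ) (hL : Continuous L) (lam : ℝ) (ρ : Measure (E d × E d)) :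
    Lag L (scal lam ρ) = ∫ p, L (lam • p.2) ∂ρ := by
  unfold Lag scal
  have hm : Measurable (fun p : E d × E d => (p.1, lam • p.2)) := by fun_prop
  rw [integral_map (φ := fun p : E d × E d => (p.1, lam • p.2)) hm.aemeasurable
    (f := fun p : E d × E d => L p.2) (hL.comp continuous_snd).aestronglyMeasurable]

lemma integrable_snd_sq {ρ : Measure (E d × E d)}
    (h : Integrable (fun p : E d × E d => ‖p.1‖ ^ 2 + ‖p.2‖ ^ 2) ρ) :
    Integrable (fun p : E d × E d => ‖p.2‖ ^ 2) ρ := by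
  refine h.mono (continuous_snd.norm.pow 2).aestronglyMeasurable ?_
  filter_upwards with p
  rw [Real.norm_eq_abs, Real.norm_eq_abs, abs_of_nonneg (by positivity),
    abs_of_nonneg (by positivity)]
  nlinarith [sq_nonneg ‖p.1‖]

lemma expMap_memP2 {γ : Measure (E d × E d)} (hp : IsProbabilityMeasure γ)
    (hi : Integrable (fun p : E d × E d => ‖p.1‖ ^ 2 + ‖p.2‖ ^ 2) γ) : expMap γ ∈ P2 d := by
  haveI := hp
  constructor
  · exact Measure.isProbabilityMeasure_map meas_addE.aemeasurable
  · rw [expMap, integrable_map_measure (g := fun x : E d => ‖x‖ ^ 2) (continuous_norm.pow 2).aestronglyMeasurable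
      meas_addE.aemeasurable]
    refine (hi.const_mul 2).mono ?_ ?_
    · exact ((continuous_fst.add continuous_snd).norm.pow 2).aestronglyMeasurable
    · filter_upwards with p
      rw [Function.comp_apply, Real.norm_eq_abs, Real.norm_eq_abs,
        abs_of_nonneg (by positivity), abs_of_nonneg (by positivity)]
      nlinarith [norm_add_le p.1 p.2, norm_nonneg p.1, norm_nonneg p.2, norm_nonneg (p.1 + p.2),
        sq_nonneg (‖p.1‖ - ‖p.2‖)]

lemma glue_eq (π : Measure (E d × E d)) [IsProbabilityMeasure π]
    (κ : Kernel (E d) (E d)) [IsMarkovKernel κ] :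
    (π ⊗ₘ (κ.comap (Prod.fst : E d × E d → E d) measurable_fst)).map
      (fun q => (q.1.1, q.2)) = π.fst ⊗ₘ κ := by
  have hm : Measurable (fun q : (E d × E d) × E d => (q.1.1, q.2)) :=
    measurable_fst.fst.prodMk measurable_snd
  ext s hs
  rw [Measure.map_apply hm hs, Measure.compProd_apply (hm hs), Measure.compProd_apply hs]
  have hfst : π.fst = π.map Prod.fst := rfl
  rw [hfst, lintegral_map (Kernel.measurable_kernel_prodMk_left hs) measurable_fst]
  refine lintegral_congr fun p => ?_
  rw [Kernel.comap_apply]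
  rfl

end Aux

section Main
variable {d : ℕ}

lemma HL_set_nonempty {μ : Measure (E d)} (hμ : μ ∈ P2 d) (G : Measure (E d) → ℝ)
    (L : E d → ℝ) (T t : ℝ) :
    {r | ∃ γ ∈ plans μ, r = G (expMap γ) + (T - t) * Lag L (scal (T - t)⁻¹ γ)}.Nonempty := by
  haveI := hμ.1
  have hm : Measurable (fun x : E d => (x, (0 : E d))) := measurable_id.prodMk measurable_const
  refine ⟨_, μ.map (fun x => (x, (0 : E d))), ⟨?_, ?_, ?_⟩, rfl⟩
  · exact Measure.isProbabilityMeasure_map hm.aemeasurable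
  · rw [Measure.map_map measurable_fst hm]
    exact Measure.map_id
  · rw [integrable_map_measure (g := fun p : E d × E d => ‖p.1‖ ^ 2 + ‖p.2‖ ^ 2)
      ((continuous_fst.norm.pow 2).add (continuous_snd.norm.pow 2)).aestronglyMeasurable
      hm.aemeasurable]
    have : ((fun p : E d × E d => ‖p.1‖ ^ 2 + ‖p.2‖ ^ 2) ∘ fun x : E d => (x, (0 : E d)))
        = fun x : E d => ‖x‖ ^ 2 + ‖(0 : E d)‖ ^ 2 := rfl
    rw [this]
    simpa using hμ.2

lemma w2_exp_le {γ : Measure (E d × E d)} {μ : Measure (E d)} (hp : IsProbabilityMeasure γ)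
    (hf : γ.map Prod.fst = μ) :
    W2 μ (expMap γ) ≤ Real.sqrt (∫ p, ‖p.2‖ ^ 2 ∂γ) := by
  haveI := hp
  have hm : Measurable (fun p : E d × E d => (p.1, p.1 + p.2)) :=
    measurable_fst.prodMk meas_addE
  have hcpl : IsCoupling (γ.map (fun p => (p.1, p.1 + p.2))) μ (expMap γ) := by
    constructor
    · rw [Measure.map_map measurable_fst hm]; exact hf
    · rw [Measure.map_map measurable_snd hm]; rfl
  have hW := w2_le (γ.map (fun p => (p.1, p.1 + p.2)))
    (Measure.isProbabilityMeasure_map hm.aemeasurable) hcpl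
  have heq : ∫ p, ‖p.1 - p.2‖ ^ 2 ∂(γ.map (fun p => (p.1, p.1 + p.2)))
      = ∫ p, ‖p.2‖ ^ 2 ∂γ := by
    rw [integral_map hm.aemeasurable contE1.aestronglyMeasurable]
    exact integral_congr_ae (Eventually.of_forall fun p => by
      show ‖p.1 - (p.1 + p.2)‖ ^ 2 = ‖p.2‖ ^ 2
      rw [sub_add_cancel_left, norm_neg])
  rwa [heq] at hW

lemma HL_bddBelow (L : E d → ℝ) (G : Measure (E d) → ℝ) (T K t : ℝ)
    (hLc : Continuous L)
    (hquad : ∃ C > 0, ∀ z : E d, L z ≤ C * (1 + ‖z‖ ^ 2))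
    (hcoer : ∃ c > 0, ∃ C > 0, ∀ z : E d, c * ‖z‖ ^ 2 - C ≤ L z)
    (hK : 0 ≤ K)
    (hG : ∀ μ ∈ P2 d, ∀ ν ∈ P2 d, |G μ - G ν| ≤ K * W2 μ ν)
    (htT : t < T) {μ : Measure (E d)} (hμ : μ ∈ P2 d) :
    BddBelow {r | ∃ γ ∈ plans μ, r = G (expMap γ) + (T - t) * Lag L (scal (T - t)⁻¹ γ)} := by
  obtain ⟨c, hc, C₂, hC₂, hco⟩ := hcoer
  obtain ⟨C₁, hC₁, hqu⟩ := hquad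
  have hs : (0 : ℝ) < T - t := sub_pos.mpr htT
  refine ⟨G μ - C₂ * (T - t) - K ^ 2 * (T - t) / (4 * c), ?_⟩
  rintro r ⟨γ, ⟨hγp, hγf, hγi⟩, rfl⟩
  haveI := hγp
  set lam : ℝ := (T - t)⁻¹ with hlam
  have hlam0 : 0 < lam := by positivity
  have hv2 : Integrable (fun p : E d × E d => ‖p.2‖ ^ 2) γ := integrable_snd_sq hγi
  set S : ℝ := ∫ p, ‖p.2‖ ^ 2 ∂γ with hSdef
  have hS0 : 0 ≤ S := integral_nonneg fun p => by positivity
  set u : ℝ := Real.sqrt S with hu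
  have hu0 : 0 ≤ u := Real.sqrt_nonneg _
  have hu2 : u ^ 2 = S := Real.sq_sqrt hS0
  -- norm of scaled vector
  have hnsm : ∀ v : E d, ‖lam • v‖ ^ 2 = lam ^ 2 * ‖v‖ ^ 2 := fun v => by
    rw [norm_smul, mul_pow, Real.norm_eq_abs, sq_abs]
  -- integrability of L ∘ (lam • ·) ∘ snd
  have habs : ∀ z : E d, |L z| ≤ (C₁ + C₂) + C₁ * ‖z‖ ^ 2 := by
    intro z
    rw [abs_le]
    constructor
    · have h1 := hco z
      nlinarith [sq_nonneg ‖z‖]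
    · have h1 := hqu z
      nlinarith [sq_nonneg ‖z‖]
  have hLint : Integrable (fun p : E d × E d => L (lam • p.2)) γ := by
    have hg : Integrable (fun p : E d × E d => (C₁ + C₂) + C₁ * lam ^ 2 * ‖p.2‖ ^ 2) γ :=
      (integrable_const ((C₁ + C₂) : ℝ)).add (hv2.const_mul (C₁ * lam ^ 2))
    refine hg.mono ((hLc.comp (continuous_snd.const_smul lam)).aestronglyMeasurable) ?_
    filter_upwards with p
    rw [Real.norm_eq_abs, Real.norm_eq_abs]
    have h1 := habs (lam • p.2)
    rw [hnsm p.2] at h1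
    have h2 : (0:ℝ) ≤ (C₁ + C₂) + C₁ * lam ^ 2 * ‖p.2‖ ^ 2 := by positivity
    rw [abs_of_nonneg h2]
    calc |L (lam • p.2)| ≤ (C₁ + C₂) + C₁ * (lam ^ 2 * ‖p.2‖ ^ 2) := h1
      _ = (C₁ + C₂) + C₁ * lam ^ 2 * ‖p.2‖ ^ 2 := by ring
  -- lower bound for Lagrangian
  have hLagLB : c * lam ^ 2 * S - C₂ ≤ Lag L (scal lam γ) := by
    rw [lag_scal L hLc]
    have hlow : Integrable (fun p : E d × E d => c * lam ^ 2 * ‖p.2‖ ^ 2 - C₂) γ :=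
      (hv2.const_mul (c * lam ^ 2)).sub (integrable_const C₂)
    have hmono : ∀ p : E d × E d, c * lam ^ 2 * ‖p.2‖ ^ 2 - C₂ ≤ L (lam • p.2) := by
      intro p
      have := hco (lam • p.2)
      rw [hnsm p.2] at this
      nlinarith
    have := integral_mono hlow hLint hmono
    calc c * lam ^ 2 * S - C₂
        = ∫ p, (c * lam ^ 2 * ‖p.2‖ ^ 2 - C₂) ∂γ := by
          rw [integral_sub (hv2.const_mul _) (integrable_const _), integral_const_mul,
            integral_const, probReal_univ]
          simp [hSdef]
      _ ≤ _ := this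
  -- bound on G
  have hexp : expMap γ ∈ P2 d := expMap_memP2 hγp hγi
  have hW2 : W2 μ (expMap γ) ≤ u := w2_exp_le hγp hγf
  have hGb : G μ - K * u ≤ G (expMap γ) := by
    have h1 := hG μ hμ (expMap γ) hexp
    have h2 : K * W2 μ (expMap γ) ≤ K * u := mul_le_mul_of_nonneg_left hW2 hK
    have h3 := (le_abs_self (G μ - G (expMap γ))).trans h1
    linarith
  -- final algebra
  have hq : 0 ≤ c * (T - t)⁻¹ * u ^ 2 - K * u + K ^ 2 * (T - t) / (4 * c) := by
    have heq : c * (T - t)⁻¹ * u ^ 2 - K * u + K ^ 2 * (T - t) / (4 * c)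
        = (2 * c * u - K * (T - t)) ^ 2 / (4 * c * (T - t)) := by
      field_simp
      ring
    rw [heq]
    positivity
  have hscale : (T - t) * (c * lam ^ 2 * S - C₂) = c * (T - t)⁻¹ * u ^ 2 - C₂ * (T - t) := by
    rw [hlam, hu2]
    field_simp
  have hLag2 : c * (T - t)⁻¹ * u ^ 2 - C₂ * (T - t) ≤ (T - t) * Lag L (scal lam γ) := by
    rw [← hscale]
    exact mul_le_mul_of_nonneg_left hLagLB hs.le
  linarith

end Main

lemma HL_le_add {d : ℕ} (L : E d → ℝ) (G : Measure (E d) → ℝ) (T K t : ℝ)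
    (hLc : Continuous L)
    (hquad : ∃ C > 0, ∀ z : E d, L z ≤ C * (1 + ‖z‖ ^ 2))
    (hcoer : ∃ c > 0, ∃ C > 0, ∀ z : E d, c * ‖z‖ ^ 2 - C ≤ L z)
    (hK : 0 ≤ K)
    (hG : ∀ μ ∈ P2 d, ∀ ν ∈ P2 d, |G μ - G ν| ≤ K * W2 μ ν)
    (htT : t < T) (μ ν : Measure (E d)) (hμ : μ ∈ P2 d) (hν : ν ∈ P2 d) :
    HL G L T t μ ≤ HL G L T t ν + K * W2 μ ν := by
  have hs : (0 : ℝ) < T - t := sub_pos.mpr htT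
  refine le_of_forall_pos_le_add fun ε hε => ?_
  -- near-optimal plan for ν
  obtain ⟨r, hrmem, hrlt⟩ :=
    Real.lt_sInf_add_pos (HL_set_nonempty hν G L T t) (half_pos hε)
  obtain ⟨γ, ⟨hγp, hγf, hγi⟩, hrval⟩ := hrmem
  haveI := hγp
  have hrlt' : r < HL G L T t ν + ε / 2 := hrlt
  -- near-optimal coupling of ν and μ
  set δ : ℝ := ε / (2 * (K + 1)) with hδ
  have hδpos : 0 < δ := by positivity
  obtain ⟨cc, hccmem, hcclt⟩ := Real.lt_sInf_add_pos (w2_set_nonempty hν.1 hμ.1) hδpos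
  obtain ⟨π, hπp, ⟨hπ1, hπ2⟩, rfl⟩ := hccmem
  haveI := hπp
  have hcclt' : Real.sqrt (∫ p, ‖p.1 - p.2‖ ^ 2 ∂π) < W2 ν μ + δ := hcclt
  -- gluing
  set κ := γ.condKernel with hκ
  set θ := π ⊗ₘ (κ.comap (Prod.fst : E d × E d → E d) measurable_fst) with hθdef
  haveI : IsProbabilityMeasure θ := by rw [hθdef]; infer_instance
  have hθγ : θ.map (fun q => (q.1.1, q.2)) = γ := by
    rw [hθdef, glue_eq]
    have h1 : π.fst = γ.fst := by
      show π.map Prod.fst = γ.map Prod.fst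
      rw [hπ1, hγf]
    rw [h1, hκ]
    exact γ.disintegrate γ.condKernel
  have hθπ : θ.map Prod.fst = π := by
    have := Measure.fst_compProd π (κ.comap (Prod.fst : E d × E d → E d) measurable_fst)
    rw [← hθdef] at this
    exact this
  -- the transported plan
  have m1 : Measurable (fun q : (E d × E d) × E d => (q.1.2, q.2)) :=
    measurable_fst.snd.prodMk measurable_snd
  have m2 : Measurable (fun q : (E d × E d) × E d => (q.1.1, q.2)) :=
    measurable_fst.fst.prodMk measurable_snd
  set γ' := θ.map (fun q : (E d × E d) × E d => (q.1.2, q.2)) with hγ'def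
  haveI hγ'p : IsProbabilityMeasure γ' := by
    rw [hγ'def]; exact Measure.isProbabilityMeasure_map m1.aemeasurable
  have hγ'f : γ'.map Prod.fst = μ := by
    rw [hγ'def, Measure.map_map measurable_fst m1]
    have : θ.map (Prod.fst ∘ fun q : (E d × E d) × E d => (q.1.2, q.2))
        = (θ.map Prod.fst).map Prod.snd := by
      rw [Measure.map_map measurable_snd measurable_fst]
      rfl
    rw [this, hθπ, hπ2]
  have hγ's : γ'.map Prod.snd = γ.map Prod.snd := by
    rw [hγ'def, Measure.map_map measurable_snd m1]
    have : θ.map (Prod.snd ∘ fun q : (E d × E d) × E d => (q.1.2, q.2))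
        = (θ.map (fun q : (E d × E d) × E d => (q.1.1, q.2))).map Prod.snd := by
      rw [Measure.map_map measurable_snd m2]
      rfl
    rw [this, hθγ]
  -- integrability for γ'
  have hsnd_int_γ : Integrable (fun x : E d => ‖x‖ ^ 2) (γ.map Prod.snd) := by
    rw [integrable_map_measure (g := fun x : E d => ‖x‖ ^ 2) (continuous_norm.pow 2).aestronglyMeasurable
      measurable_snd.aemeasurable]
    exact integrable_snd_sq hγi
  have h1int : Integrable (fun p : E d × E d => ‖p.1‖ ^ 2) γ' := by
    have := (integrable_map_measure (f := (Prod.fst : E d × E d → E d))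
      (continuous_norm.pow 2).aestronglyMeasurable measurable_fst.aemeasurable).mp
      (by rw [hγ'f]; exact hμ.2)
    exact this
  have h2int : Integrable (fun p : E d × E d => ‖p.2‖ ^ 2) γ' := by
    have := (integrable_map_measure (f := (Prod.snd : E d × E d → E d))
      (continuous_norm.pow 2).aestronglyMeasurable measurable_snd.aemeasurable).mp
      (by rw [hγ's]; exact hsnd_int_γ)
    exact this
  have hγ'i : Integrable (fun p : E d × E d => ‖p.1‖ ^ 2 + ‖p.2‖ ^ 2) γ' := h1int.add h2int
  have hγ'pl : γ' ∈ plans μ := ⟨hγ'p, hγ'f, hγ'i⟩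
  -- equal Lagrangian costs
  have hLageq : Lag L (scal (T - t)⁻¹ γ') = Lag L (scal (T - t)⁻¹ γ) := by
    rw [lag_scal L hLc, lag_scal L hLc]
    exact integral_snd_congr hγ's (hLc.comp (continuous_const_smul ((T - t)⁻¹)))
  -- P2 membership of the exponentials
  have hexpγ : expMap γ ∈ P2 d := expMap_memP2 hγp hγi
  have hexpγ' : expMap γ' ∈ P2 d := expMap_memP2 hγ'p hγ'i
  -- coupling between the exponentials
  have m3 : Measurable (fun q : (E d × E d) × E d => (q.1.2 + q.2, q.1.1 + q.2)) :=
    (measurable_fst.snd.add measurable_snd).prodMk (measurable_fst.fst.add measurable_snd)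
  set ρ := θ.map (fun q : (E d × E d) × E d => (q.1.2 + q.2, q.1.1 + q.2)) with hρdef
  have hρ1 : ρ.map Prod.fst = expMap γ' := by
    rw [hρdef, Measure.map_map measurable_fst m3]
    have : θ.map (Prod.fst ∘ fun q : (E d × E d) × E d => (q.1.2 + q.2, q.1.1 + q.2))
        = γ'.map (fun p : E d × E d => p.1 + p.2) := by
      rw [hγ'def, Measure.map_map meas_addE m1]
      rfl
    rw [this]
    rfl
  have hρ2 : ρ.map Prod.snd = expMap γ := by
    rw [hρdef, Measure.map_map measurable_snd m3]
    have : θ.map (Prod.snd ∘ fun q : (E d × E d) × E d => (q.1.2 + q.2, q.1.1 + q.2))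
        = (θ.map (fun q : (E d × E d) × E d => (q.1.1, q.2))).map
            (fun p : E d × E d => p.1 + p.2) := by
      rw [Measure.map_map meas_addE m2]
      rfl
    rw [this, hθγ]
    rfl
  have hρint : ∫ p, ‖p.1 - p.2‖ ^ 2 ∂ρ = ∫ p, ‖p.1 - p.2‖ ^ 2 ∂π := by
    rw [hρdef, integral_map m3.aemeasurable contE1.aestronglyMeasurable]
    have step1 : ∫ q : (E d × E d) × E d, ‖(q.1.2 + q.2) - (q.1.1 + q.2)‖ ^ 2 ∂θ
        = ∫ q : (E d × E d) × E d, ‖q.1.1 - q.1.2‖ ^ 2 ∂θ :=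
      integral_congr_ae (Eventually.of_forall fun q => by
        show ‖q.1.2 + q.2 - (q.1.1 + q.2)‖ ^ 2 = ‖q.1.1 - q.1.2‖ ^ 2
        rw [add_sub_add_right_eq_sub, norm_sub_rev])
    have step2 : ∫ p, ‖p.1 - p.2‖ ^ 2 ∂π
        = ∫ q : (E d × E d) × E d, ‖q.1.1 - q.1.2‖ ^ 2 ∂θ := by
      rw [← hθπ, integral_map measurable_fst.aemeasurable contE1.aestronglyMeasurable]
    rw [step2]
    exact step1
  have hW2exp : W2 (expMap γ') (expMap γ) ≤ W2 ν μ + δ := by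
    have h := w2_le ρ (by rw [hρdef]; exact Measure.isProbabilityMeasure_map m3.aemeasurable) ⟨hρ1, hρ2⟩
    rw [hρint] at h
    exact h.trans hcclt'.le
  -- bound on G
  have hGb : G (expMap γ') ≤ G (expMap γ) + K * (W2 ν μ + δ) := by
    have h1 := hG _ hexpγ' _ hexpγ
    have h2 : K * W2 (expMap γ') (expMap γ) ≤ K * (W2 ν μ + δ) :=
      mul_le_mul_of_nonneg_left hW2exp hK
    have h3 := (le_abs_self (G (expMap γ') - G (expMap γ))).trans h1
    linarith
  -- conclude
  have hHLμ : HL G L T t μ ≤ G (expMap γ') + (T - t) * Lag L (scal (T - t)⁻¹ γ') :=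
    csInf_le (HL_bddBelow L G T K t hLc hquad hcoer hK hG htT hμ) ⟨γ', hγ'pl, rfl⟩
  have hKδ : K * δ ≤ ε / 2 := by
    have h1 : δ * (2 * (K + 1)) = ε := by
      rw [hδ]; field_simp
    nlinarith [hδpos.le]
  have hsym : W2 ν μ = W2 μ ν := w2_symm ν μ
  rw [hLageq] at hHLμ
  calc HL G L T t μ ≤ G (expMap γ') + (T - t) * Lag L (scal (T - t)⁻¹ γ) := hHLμ
    _ ≤ G (expMap γ) + K * (W2 ν μ + δ) + (T - t) * Lag L (scal (T - t)⁻¹ γ) := by linarith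
    _ = r + K * W2 ν μ + K * δ := by rw [hrval]; ring
    _ ≤ HL G L T t ν + K * W2 μ ν + ε := by
        rw [← hsym]; linarith

theorem hopf_lax_lipschitz {d : ℕ} (L : E d → ℝ) (G : Measure (E d) → ℝ) (T K : ℝ)
    (hLconv : ConvexOn ℝ Set.univ L) (hL0 : L 0 = 0)
    (hsuper : ∀ M : ℝ, ∃ R : ℝ, ∀ z : E d, R ≤ ‖z‖ → M * ‖z‖ ≤ L z)
    (hquad : ∃ C > 0, ∀ z : E d, L z ≤ C * (1 + ‖z‖ ^ 2))
    (hcoer : ∃ c > 0, ∃ C > 0, ∀ z : E d, c * ‖z‖ ^ 2 - C ≤ L z)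
    (hK : 0 ≤ K)
    (hG : ∀ μ ∈ P2 d, ∀ ν ∈ P2 d, |G μ - G ν| ≤ K * W2 μ ν)
    (t : ℝ) (ht0 : 0 < t) (htT : t < T)
    (μ ν : Measure (E d)) (hμ : μ ∈ P2 d) (hν : ν ∈ P2 d) :
    |HL G L T t μ - HL G L T t ν| ≤ K * W2 μ ν := by
  have hLc : Continuous L :=
    continuousOn_univ.mp (hLconv.continuousOn isOpen_univ)
  rw [abs_sub_le_iff]
  constructor
  · have h := HL_le_add L G T K t hLc hquad hcoer hK hG htT μ ν hμ hν
    linarith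
  · have h := HL_le_add L G T K t hLc hquad hcoer hK hG htT ν μ hν hμ
    rw [w2_symm ν μ] at h
    linarith
end
end

section
/- Under the Hopf–Lax hypotheses, the map t ↦ 𝒱(t,μ) is nondecreasing on [0,T): for 0 ≤ t < t+h < T, 𝒱(t,μ) ≤ 𝒱(t+h,μ); moreover 𝒱(t+h,μ) − 𝒱(t,μ) ≤ h · sup{ ℋ(ξ) : ξ ∈ 𝒫_{2,μ}(ℝ^{2d}), ‖ξ‖_μ ≤ Lip(𝒢;W₂) }, where ℋ(ξ) = ∫ H(p) dξ(x,p) with H = L* the Legendre transform of L. -/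
open MeasureTheory Set Filter Metric
open scoped Topology ENNReal NNReal

noncomputable section

namespace HopfLaxAux

variable {d : ℕ}

lemma measurable_phi (c : ℝ) : Measurable (fun p : E d × E d => (p.1, c • p.2)) :=
  measurable_fst.prodMk (measurable_snd.const_smul c)

lemma measurable_add2 : Measurable (fun p : E d × E d => p.1 + p.2) :=
  measurable_fst.add measurable_snd

lemma measurable_zero_pair : Measurable (fun x : E d => (x, (0 : E d))) :=
  measurable_id.prodMk measurable_const

lemma norm_smul_sq (a : ℝ) (z : E d) : ‖a • z‖ ^ 2 = a ^ 2 * ‖z‖ ^ 2 := by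
  rw [norm_smul, mul_pow, Real.norm_eq_abs, sq_abs]

lemma integral_scal (c : ℝ) (γ : Measure (E d × E d)) {g : E d × E d → ℝ}
    (hg : AEStronglyMeasurable g (scal c γ)) :
    ∫ p, g p ∂(scal c γ) = ∫ p, g (p.1, c • p.2) ∂γ :=
  integral_map (measurable_phi c).aemeasurable hg

lemma isProb_scal (c : ℝ) (γ : Measure (E d × E d)) [IsProbabilityMeasure γ] :
    IsProbabilityMeasure (scal c γ) :=
  Measure.isProbabilityMeasure_map (measurable_phi c).aemeasurable

lemma scal_map_fst (c : ℝ) (γ : Measure (E d × E d)) :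
    (scal c γ).map Prod.fst = γ.map Prod.fst := by
  rw [scal, Measure.map_map measurable_fst (measurable_phi c)]; rfl

lemma scal_scal (a b : ℝ) (γ : Measure (E d × E d)) :
    scal a (scal b γ) = scal (a * b) γ := by
  rw [scal, scal, scal, Measure.map_map (measurable_phi a) (measurable_phi b)]
  congr 1; funext p; simp [Function.comp, smul_smul]

lemma integral_snd_sq_scal (c : ℝ) (γ : Measure (E d × E d)) :
    ∫ p, ‖p.2‖ ^ 2 ∂(scal c γ) = c ^ 2 * ∫ p, ‖p.2‖ ^ 2 ∂γ := by
  rw [integral_scal c γ (g := fun p => ‖p.2‖ ^ 2) ((continuous_snd.norm.pow 2).aestronglyMeasurable)]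
  simp only [norm_smul_sq]
  exact integral_const_mul _ _

lemma plNorm_scal (c : ℝ) (γ : Measure (E d × E d)) :
    plNorm (scal c γ) = |c| * plNorm γ := by
  rw [plNorm, plNorm, integral_snd_sq_scal, Real.sqrt_mul (sq_nonneg c), Real.sqrt_sq_eq_abs]

lemma plans_int_snd {γ : Measure (E d × E d)}
    (h : Integrable (fun p : E d × E d => ‖p.1‖ ^ 2 + ‖p.2‖ ^ 2) γ) :
    Integrable (fun p : E d × E d => ‖p.2‖ ^ 2) γ := by
  refine h.mono ((continuous_snd.norm.pow 2).aestronglyMeasurable) ?_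
  filter_upwards with p
  rw [Real.norm_eq_abs, Real.norm_eq_abs, abs_of_nonneg (by positivity),
    abs_of_nonneg (by positivity : (0:ℝ) ≤ ‖p.1‖ ^ 2 + ‖p.2‖ ^ 2)]
  nlinarith [sq_nonneg ‖p.1‖]

lemma plans_int_fst {γ : Measure (E d × E d)}
    (h : Integrable (fun p : E d × E d => ‖p.1‖ ^ 2 + ‖p.2‖ ^ 2) γ) :
    Integrable (fun p : E d × E d => ‖p.1‖ ^ 2) γ := by
  refine h.mono ((continuous_fst.norm.pow 2).aestronglyMeasurable) ?_
  filter_upwards with p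
  rw [Real.norm_eq_abs, Real.norm_eq_abs, abs_of_nonneg (by positivity),
    abs_of_nonneg (by positivity : (0:ℝ) ≤ ‖p.1‖ ^ 2 + ‖p.2‖ ^ 2)]
  nlinarith [sq_nonneg ‖p.2‖]

lemma integrable_quad_snd {γ : Measure (E d × E d)} [IsProbabilityMeasure γ]
    (hint : Integrable (fun p : E d × E d => ‖p.2‖ ^ 2) γ) {g : E d → ℝ} (hg : Continuous g)
    {A B : ℝ} (hC : ∀ z : E d, |g z| ≤ A + B * ‖z‖ ^ 2) :
    Integrable (fun p : E d × E d => g p.2) γ := by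
  refine Integrable.mono ((integrable_const A).add (hint.const_mul B))
    ((hg.comp continuous_snd).aestronglyMeasurable) ?_
  filter_upwards with p
  rw [Real.norm_eq_abs, Real.norm_eq_abs]
  exact le_trans (hC p.2) (le_abs_self _)

lemma scal_mem_plans {μ : Measure (E d)} (c : ℝ) {γ : Measure (E d × E d)}
    (hγ : γ ∈ plans μ) : scal c γ ∈ plans μ := by
  obtain ⟨h1, h2, h3⟩ := hγ
  haveI := h1
  refine ⟨isProb_scal c γ, by rw [scal_map_fst, h2], ?_⟩
  rw [scal, integrable_map_measure (g := fun p : E d × E d => ‖p.1‖ ^ 2 + ‖p.2‖ ^ 2)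
    ((continuous_fst.norm.pow 2).add (continuous_snd.norm.pow 2)).aestronglyMeasurable
    (measurable_phi c).aemeasurable]
  have e : ((fun p : E d × E d => ‖p.1‖ ^ 2 + ‖p.2‖ ^ 2) ∘ fun p : E d × E d => (p.1, c • p.2))
      = fun p : E d × E d => ‖p.1‖ ^ 2 + c ^ 2 * ‖p.2‖ ^ 2 := by
    funext p; simp [Function.comp, norm_smul_sq]
  rw [e]
  exact (plans_int_fst h3).add ((plans_int_snd h3).const_mul _)

lemma zero_plan_mem {μ : Measure (E d)} (hμ : μ ∈ P2 d) :
    μ.map (fun x => (x, (0 : E d))) ∈ plans μ := by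
  haveI := hμ.1
  refine ⟨Measure.isProbabilityMeasure_map measurable_zero_pair.aemeasurable, ?_, ?_⟩
  · rw [Measure.map_map measurable_fst measurable_zero_pair]
    have : (Prod.fst ∘ fun x : E d => (x, (0 : E d))) = id := rfl
    rw [this, Measure.map_id]
  · rw [integrable_map_measure (g := fun p : E d × E d => ‖p.1‖ ^ 2 + ‖p.2‖ ^ 2)
      ((continuous_fst.norm.pow 2).add (continuous_snd.norm.pow 2)).aestronglyMeasurable
      measurable_zero_pair.aemeasurable]
    have e : ((fun p : E d × E d => ‖p.1‖ ^ 2 + ‖p.2‖ ^ 2) ∘ fun x : E d => (x, (0 : E d)))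
        = fun x : E d => ‖x‖ ^ 2 := by funext x; simp
    rw [e]; exact hμ.2

lemma expMap_zero_plan (μ : Measure (E d)) :
    expMap (μ.map (fun x => (x, (0 : E d)))) = μ := by
  rw [expMap, Measure.map_map measurable_add2 measurable_zero_pair]
  have : ((fun p : E d × E d => p.1 + p.2) ∘ fun x : E d => (x, (0 : E d))) = id := by
    funext x; simp
  rw [this, Measure.map_id]

lemma scal_zero_plan (c : ℝ) (μ : Measure (E d)) :
    scal c (μ.map (fun x => (x, (0 : E d)))) = μ.map (fun x => (x, (0 : E d))) := by
  rw [scal, Measure.map_map (measurable_phi c) measurable_zero_pair]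
  congr 1; funext x; simp

lemma Lag_zero_plan {L : E d → ℝ} (hLcont : Continuous L) (hL0 : L 0 = 0)
    (μ : Measure (E d)) [IsProbabilityMeasure μ] :
    Lag L (μ.map (fun x => (x, (0 : E d)))) = 0 := by
  rw [Lag, integral_map (f := fun p : E d × E d => L p.2) measurable_zero_pair.aemeasurable
    ((hLcont.comp continuous_snd).aestronglyMeasurable)]
  simp [hL0]

lemma plNorm_zero_plan (μ : Measure (E d)) :
    plNorm (μ.map (fun x => (x, (0 : E d)))) = 0 := by
  rw [plNorm, integral_map (f := fun p : E d × E d => ‖p.2‖ ^ 2)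
    measurable_zero_pair.aemeasurable ((continuous_snd.norm.pow 2).aestronglyMeasurable)]
  simp

lemma Lag_scal {L : E d → ℝ} (hLcont : Continuous L) (c : ℝ) (γ : Measure (E d × E d)) :
    Lag L (scal c γ) = ∫ p, L (c • p.2) ∂γ :=
  integral_scal c γ (g := fun p => L p.2)
    ((hLcont.comp continuous_snd).aestronglyMeasurable)

lemma W2_le {μ ν : Measure (E d)} {θ : Measure (E d × E d)} (h1 : IsProbabilityMeasure θ)
    (h2 : IsCoupling θ μ ν) : W2 μ ν ≤ Real.sqrt (∫ p, ‖p.1 - p.2‖ ^ 2 ∂θ) := by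
  apply csInf_le
  · exact ⟨0, by rintro r ⟨γ, _, _, rfl⟩; exact Real.sqrt_nonneg _⟩
  · exact ⟨θ, h1, h2, rfl⟩

lemma expMap_mem_P2 {μ : Measure (E d)} {γ : Measure (E d × E d)} (hγ : γ ∈ plans μ) :
    expMap γ ∈ P2 d := by
  obtain ⟨h1, _, h3⟩ := hγ
  haveI := h1
  refine ⟨Measure.isProbabilityMeasure_map measurable_add2.aemeasurable, ?_⟩
  rw [expMap, integrable_map_measure (g := fun x : E d => ‖x‖ ^ 2) (continuous_norm.pow 2).aestronglyMeasurable
    measurable_add2.aemeasurable]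
  refine Integrable.mono (h3.const_mul 2)
    (((continuous_fst.add continuous_snd).norm.pow 2).aestronglyMeasurable) ?_
  filter_upwards with p
  simp only [Function.comp_apply, Real.norm_eq_abs]
  rw [abs_of_nonneg (by positivity : (0:ℝ) ≤ ‖p.1 + p.2‖ ^ 2),
    abs_of_nonneg (by positivity : (0:ℝ) ≤ 2 * (‖p.1‖ ^ 2 + ‖p.2‖ ^ 2))]
  have h := norm_add_le p.1 p.2
  nlinarith [norm_nonneg p.1, norm_nonneg p.2, norm_nonneg (p.1 + p.2),
    sq_nonneg (‖p.1‖ - ‖p.2‖)]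

lemma W2_left_expMap {μ : Measure (E d)} {γ : Measure (E d × E d)} (hγ : γ ∈ plans μ) :
    W2 μ (expMap γ) ≤ plNorm γ := by
  obtain ⟨h1, h2, _⟩ := hγ
  haveI := h1
  have hm : Measurable (fun p : E d × E d => (p.1, p.1 + p.2)) :=
    measurable_fst.prodMk measurable_add2
  refine le_trans (W2_le (θ := γ.map fun p => (p.1, p.1 + p.2))
    (Measure.isProbabilityMeasure_map hm.aemeasurable) ⟨?_, ?_⟩) ?_
  · rw [Measure.map_map measurable_fst hm]; exact h2
  · rw [Measure.map_map measurable_snd hm]; rfl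
  · rw [integral_map hm.aemeasurable (f := fun p : E d × E d => ‖p.1 - p.2‖ ^ 2)
      (((continuous_fst.sub continuous_snd).norm.pow 2).aestronglyMeasurable)]
    rw [plNorm]
    apply le_of_eq; congr 1
    apply integral_congr_ae; filter_upwards with p
    have : p.1 - (p.1 + p.2) = -p.2 := by abel
    simp [this]

lemma W2_expMap_scal {μ : Measure (E d)} {γ : Measure (E d × E d)} (hγ : γ ∈ plans μ)
    (lam : ℝ) : W2 (expMap (scal lam γ)) (expMap γ) ≤ |lam - 1| * plNorm γ := by
  obtain ⟨h1, _, _⟩ := hγ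
  haveI := h1
  have hm : Measurable (fun p : E d × E d => (p.1 + lam • p.2, p.1 + p.2)) :=
    (measurable_fst.add (measurable_snd.const_smul lam)).prodMk measurable_add2
  refine le_trans (W2_le (θ := γ.map fun p => (p.1 + lam • p.2, p.1 + p.2))
    (Measure.isProbabilityMeasure_map hm.aemeasurable) ⟨?_, ?_⟩) ?_
  · rw [Measure.map_map measurable_fst hm, expMap, scal,
      Measure.map_map measurable_add2 (measurable_phi lam)]
    rfl
  · rw [Measure.map_map measurable_snd hm]; rfl
  · rw [integral_map hm.aemeasurable (f := fun p : E d × E d => ‖p.1 - p.2‖ ^ 2)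
      (((continuous_fst.sub continuous_snd).norm.pow 2).aestronglyMeasurable)]
    have e : ∀ p : E d × E d, ‖(p.1 + lam • p.2, p.1 + p.2).1 - (p.1 + lam • p.2, p.1 + p.2).2‖ ^ 2
        = (lam - 1) ^ 2 * ‖p.2‖ ^ 2 := by
      intro p
      have : (p.1 + lam • p.2) - (p.1 + p.2) = (lam - 1) • p.2 := by
        rw [sub_smul, one_smul]; abel
      rw [this, norm_smul_sq]
    rw [integral_congr_ae (Filter.Eventually.of_forall e), integral_const_mul,
      plNorm, Real.sqrt_mul (sq_nonneg _), Real.sqrt_sq_eq_abs]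

lemma sL_mono {L : E d → ℝ} (hLconv : ConvexOn ℝ Set.univ L) (hL0 : L 0 = 0)
    {s s' : ℝ} (h0 : 0 < s') (h1 : s' ≤ s) (z : E d) :
    s * L (s⁻¹ • z) ≤ s' * L (s'⁻¹ • z) := by
  have hs : 0 < s := lt_of_lt_of_le h0 h1
  have hsne : s ≠ 0 := hs.ne'
  have hs'ne : s' ≠ 0 := h0.ne'
  have ha : (0:ℝ) ≤ s' / s := by positivity
  have hb : (0:ℝ) ≤ 1 - s' / s := by
    have h2 : s' / s ≤ 1 := (div_le_one hs).2 h1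
    linarith
  have hcomb := hLconv.2 (Set.mem_univ (s'⁻¹ • z)) (Set.mem_univ (0 : E d)) ha hb (by ring)
  rw [smul_zero, add_zero, smul_smul] at hcomb
  have he : s' / s * s'⁻¹ = s⁻¹ := by field_simp
  rw [he, smul_eq_mul, smul_eq_mul, hL0, mul_zero, add_zero] at hcomb
  calc s * L (s⁻¹ • z) ≤ s * (s' / s * L (s'⁻¹ • z)) := mul_le_mul_of_nonneg_left hcomb hs.le
    _ = s' * L (s'⁻¹ • z) := by field_simp

end HopfLaxAux

set_option maxHeartbeats 1000000 in
theorem hopf_lax_time_monotone {d : ℕ} (L H : E d → ℝ) (G : Measure (E d) → ℝ) (T K : ℝ)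
    (hLconv : ConvexOn ℝ Set.univ L) (hL0 : L 0 = 0)
    (hsuper : ∀ M : ℝ, ∃ R : ℝ, ∀ z : E d, R ≤ ‖z‖ → M * ‖z‖ ≤ L z)
    (hquad : ∃ C > 0, ∀ z : E d, L z ≤ C * (1 + ‖z‖ ^ 2))
    (hcoer : ∃ c > 0, ∃ C > 0, ∀ z : E d, c * ‖z‖ ^ 2 - C ≤ L z)
    (hH : ∀ p : E d, IsLUB {r | ∃ v : E d, r = (rinner (-v) (p)) - L v} (H p))
    (hK : 0 ≤ K)
    (hG : ∀ μ ∈ P2 d, ∀ ν ∈ P2 d, |G μ - G ν| ≤ K * W2 μ ν)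
    (t h : ℝ) (ht : 0 ≤ t) (hh : 0 < h) (hT : t + h < T)
    (μ : Measure (E d)) (hμ : μ ∈ P2 d) :
    HL G L T t μ ≤ HL G L T (t + h) μ ∧
      HL G L T (t + h) μ - HL G L T t μ ≤
        h * sSup {r | ∃ ξ ∈ plans μ, plNorm ξ ≤ K ∧ r = ∫ q, H q.2 ∂ξ} := by
  classical
  obtain ⟨Cq, hCqpos, hCq⟩ := hquad
  obtain ⟨c, hcpos, Cc, hCcpos, hCc⟩ := hcoer
  have hLcont : Continuous L := hLconv.locallyLipschitz.continuous
  have habs : ∀ z : E d, |L z| ≤ (Cq + Cc) + (Cq + Cc) * ‖z‖ ^ 2 := by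
    intro z
    rw [abs_le]
    constructor
    · nlinarith [hCc z, sq_nonneg ‖z‖]
    · nlinarith [hCq z, sq_nonneg ‖z‖]
  have hHnn : ∀ p : E d, 0 ≤ H p := by
    intro p
    refine (hH p).1 ⟨0, ?_⟩
    simp [rinner, hL0]
  have hHub : ∀ p : E d, H p ≤ ‖p‖ ^ 2 / (4 * c) + Cc := by
    intro p
    refine (hH p).2 ?_
    rintro r ⟨v, rfl⟩
    have h1 : rinner (-v) p ≤ ‖v‖ * ‖p‖ := by
      rw [rinner]
      calc (inner ℝ (-v) p : ℝ) ≤ ‖(-v)‖ * ‖p‖ := real_inner_le_norm _ _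
        _ = ‖v‖ * ‖p‖ := by rw [norm_neg]
    have h2 := hCc v
    have h3 : ‖v‖ * ‖p‖ ≤ c * ‖v‖ ^ 2 + ‖p‖ ^ 2 / (4 * c) := by
      have h4 : (0:ℝ) < 4 * c := by linarith
      have h5 : (‖p‖ ^ 2 / (4 * c)) * (4 * c) = ‖p‖ ^ 2 := div_mul_cancel₀ _ h4.ne'
      nlinarith [sq_nonneg (2 * c * ‖v‖ - ‖p‖), hcpos, h5]
    linarith
  have hHconv : ConvexOn ℝ Set.univ H := by
    refine ⟨convex_univ, ?_⟩
    intro p _ q _ a b ha hb hab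
    refine ((hH _).2 ?_)
    rintro r ⟨v, rfl⟩
    have h1 : rinner (-v) p - L v ≤ H p := (hH p).1 ⟨v, rfl⟩
    have h2 : rinner (-v) q - L v ≤ H q := (hH q).1 ⟨v, rfl⟩
    have e : rinner (-v) (a • p + b • q) = a * rinner (-v) p + b * rinner (-v) q := by
      simp only [rinner]
      rw [inner_add_right, real_inner_smul_right, real_inner_smul_right]
    have e2 : rinner (-v) (a • p + b • q) - L v
        = a * (rinner (-v) p - L v) + b * (rinner (-v) q - L v) := by
      rw [e]; linear_combination (L v) * hab
    have h3 : a * (rinner (-v) p - L v) + b * (rinner (-v) q - L v) ≤ a * H p + b * H q :=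
      add_le_add (mul_le_mul_of_nonneg_left h1 ha) (mul_le_mul_of_nonneg_left h2 hb)
    rw [e2]
    simpa [smul_eq_mul] using h3
  have hHcont : Continuous H := hHconv.locallyLipschitz.continuous
  have hs : (0:ℝ) < T - t := by linarith
  have hs' : (0:ℝ) < T - (t + h) := by linarith
  haveI hμP := hμ.1
  have hHL : ∀ τ : ℝ, HL G L T τ μ
      = sInf {r | ∃ γ ∈ plans μ, r = G (expMap γ) + (T - τ) * Lag L (scal (T - τ)⁻¹ γ)} :=
    fun τ => rfl
  -- integrability of L along rescaled plans
  have hLint : ∀ (a : ℝ) (γ : Measure (E d × E d)), γ ∈ plans μ →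
      Integrable (fun p : E d × E d => L (a • p.2)) γ := by
    intro a γ hγ
    haveI := hγ.1
    refine HopfLaxAux.integrable_quad_snd (HopfLaxAux.plans_int_snd hγ.2.2)
      (hLcont.comp (continuous_const_smul a)) (A := Cq + Cc) (B := (Cq + Cc) * a ^ 2) ?_
    intro z
    show |L (a • z)| ≤ _
    have h1 := habs (a • z)
    rw [HopfLaxAux.norm_smul_sq] at h1
    nlinarith [h1]
  -- nonemptiness of HL sets
  have hne : ∀ s : ℝ,
      Set.Nonempty {r | ∃ γ ∈ plans μ, r = G (expMap γ) + s * Lag L (scal s⁻¹ γ)} := by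
    intro s
    exact ⟨_, _, HopfLaxAux.zero_plan_mem hμ, rfl⟩
  -- lower bound of HL sets
  have hbdd : ∀ s : ℝ, 0 < s →
      BddBelow {r | ∃ γ ∈ plans μ, r = G (expMap γ) + s * Lag L (scal s⁻¹ γ)} := by
    intro s hspos
    refine ⟨G μ - Cc * s - K ^ 2 / (4 * (c / s)), ?_⟩
    rintro r ⟨γ, hγ, rfl⟩
    haveI := hγ.1
    have hmnn : 0 ≤ plNorm γ := Real.sqrt_nonneg _
    set m := plNorm γ with hmdef
    have hI : ∫ p, ‖p.2‖ ^ 2 ∂γ = m ^ 2 := by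
      rw [hmdef, plNorm, Real.sq_sqrt (integral_nonneg fun p => sq_nonneg _)]
    have hGe : G μ - K * m ≤ G (expMap γ) := by
      have h1 := hG μ hμ (expMap γ) (HopfLaxAux.expMap_mem_P2 hγ)
      have h2 : W2 μ (expMap γ) ≤ m := HopfLaxAux.W2_left_expMap hγ
      have h3 : K * W2 μ (expMap γ) ≤ K * m := mul_le_mul_of_nonneg_left h2 hK
      have h4 : G μ - G (expMap γ) ≤ |G μ - G (expMap γ)| := le_abs_self _
      linarith
    have hLag : c * s⁻¹ ^ 2 * m ^ 2 - Cc ≤ Lag L (scal s⁻¹ γ) := by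
      rw [HopfLaxAux.Lag_scal hLcont]
      have hintc : Integrable (fun p : E d × E d => c * s⁻¹ ^ 2 * ‖p.2‖ ^ 2) γ :=
        (HopfLaxAux.plans_int_snd hγ.2.2).const_mul _
      have hintc' : Integrable (fun p : E d × E d => c * s⁻¹ ^ 2 * ‖p.2‖ ^ 2 - Cc) γ :=
        hintc.sub (integrable_const _)
      have hmono := integral_mono hintc' (hLint s⁻¹ γ hγ) (fun p => by
        have h1 := hCc (s⁻¹ • p.2)
        rw [HopfLaxAux.norm_smul_sq] at h1
        nlinarith [h1])
      have e : ∫ p, (c * s⁻¹ ^ 2 * ‖p.2‖ ^ 2 - Cc) ∂γ = c * s⁻¹ ^ 2 * m ^ 2 - Cc := by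
        rw [integral_sub hintc (integrable_const _), MeasureTheory.integral_const_mul, hI,
          integral_const]
        simp [measure_univ]
      rw [e] at hmono
      exact hmono
    have key : K * m ≤ (c / s) * m ^ 2 + K ^ 2 / (4 * (c / s)) := by
      have ha : 0 < c / s := div_pos hcpos hspos
      have hd : K ^ 2 / (4 * (c / s)) * (4 * (c / s)) = K ^ 2 :=
        div_mul_cancel₀ _ (by positivity)
      nlinarith [sq_nonneg (2 * (c / s) * m - K), ha, hd]
    have h5 : s * (c * s⁻¹ ^ 2 * m ^ 2 - Cc) ≤ s * Lag L (scal s⁻¹ γ) :=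
      mul_le_mul_of_nonneg_left hLag hspos.le
    have hrw : s * (c * s⁻¹ ^ 2 * m ^ 2 - Cc) = (c / s) * m ^ 2 - Cc * s := by
      have hsne : s ≠ 0 := hspos.ne'
      field_simp
    rw [hrw] at h5
    linarith
  -- monotonicity of the Lagrangian cost in time
  have hmono : ∀ γ ∈ plans μ, (T - t) * Lag L (scal (T - t)⁻¹ γ)
      ≤ (T - (t + h)) * Lag L (scal (T - (t + h))⁻¹ γ) := by
    intro γ hγ
    haveI := hγ.1
    rw [HopfLaxAux.Lag_scal hLcont, HopfLaxAux.Lag_scal hLcont,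
      ← MeasureTheory.integral_const_mul, ← MeasureTheory.integral_const_mul]
    refine integral_mono ((hLint _ γ hγ).const_mul _) ((hLint _ γ hγ).const_mul _) fun p => ?_
    exact HopfLaxAux.sL_mono hLconv hL0 hs' (by linarith) p.2
  constructor
  · -- monotone part
    rw [hHL t, hHL (t + h)]
    refine le_csInf (hne (T - (t + h))) ?_
    rintro r ⟨γ, hγ, rfl⟩
    refine le_trans (csInf_le (hbdd (T - t) hs) ⟨γ, hγ, rfl⟩) ?_
    have := hmono γ hγ
    linarith
  · -- quantitative part
    set Sset : Set ℝ := {r | ∃ ξ ∈ plans μ, plNorm ξ ≤ K ∧ r = ∫ q, H q.2 ∂ξ} with hSset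
    set S : ℝ := sSup Sset with hSdef
    have hSbdd : BddAbove Sset := by
      refine ⟨Cc + 1 / (4 * c) * K ^ 2, ?_⟩
      rintro r ⟨ξ, hξ, hn, rfl⟩
      haveI := hξ.1
      have hint := HopfLaxAux.plans_int_snd hξ.2.2
      have hHint : Integrable (fun q : E d × E d => H q.2) ξ :=
        HopfLaxAux.integrable_quad_snd hint hHcont (A := Cc) (B := 1 / (4 * c)) (fun z => by
          rw [abs_of_nonneg (hHnn z)]
          have h1 := hHub z
          have e : ‖z‖ ^ 2 / (4 * c) = 1 / (4 * c) * ‖z‖ ^ 2 := by ring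
          linarith)
      have hIle : ∫ p, ‖p.2‖ ^ 2 ∂ξ ≤ K ^ 2 := by
        have h0 : 0 ≤ ∫ p, ‖p.2‖ ^ 2 ∂ξ := integral_nonneg fun p => sq_nonneg _
        have h1 : plNorm ξ = Real.sqrt (∫ p, ‖p.2‖ ^ 2 ∂ξ) := rfl
        nlinarith [Real.sq_sqrt h0, Real.sqrt_nonneg (∫ p, ‖p.2‖ ^ 2 ∂ξ), hn, h1 ▸ hn]
      calc ∫ q, H q.2 ∂ξ ≤ ∫ q : E d × E d, (Cc + 1 / (4 * c) * ‖q.2‖ ^ 2) ∂ξ := by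
            refine integral_mono hHint ((integrable_const _).add (hint.const_mul _)) fun q => ?_
            have h1 := hHub q.2
            have e : ‖q.2‖ ^ 2 / (4 * c) = 1 / (4 * c) * ‖q.2‖ ^ 2 := by ring
            linarith
        _ = Cc + 1 / (4 * c) * ∫ p, ‖p.2‖ ^ 2 ∂ξ := by
            rw [integral_add (integrable_const _) (hint.const_mul _), integral_const,
              MeasureTheory.integral_const_mul]
            simp [measure_univ]
        _ ≤ Cc + 1 / (4 * c) * K ^ 2 := by
            have h1 : (0:ℝ) ≤ 1 / (4 * c) := by positivity
            nlinarith [hIle]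
    have hdual : ∀ η ∈ plans μ, ∃ rr ∈ Sset, K * plNorm η - Lag L η ≤ rr := by
      intro η hη
      haveI := hη.1
      have hint := HopfLaxAux.plans_int_snd hη.2.2
      have hJnn : 0 ≤ ∫ p, ‖p.2‖ ^ 2 ∂η := integral_nonneg fun p => sq_nonneg _
      by_cases hm0 : plNorm η = 0
      · have hJ0 : ∫ p, ‖p.2‖ ^ 2 ∂η = 0 := by
          have h1 : plNorm η = Real.sqrt (∫ p, ‖p.2‖ ^ 2 ∂η) := rfl
          nlinarith [Real.sq_sqrt hJnn, h1 ▸ hm0]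
        have hae : (fun p : E d × E d => ‖p.2‖ ^ 2) =ᵐ[η] 0 :=
          (integral_eq_zero_iff_of_nonneg (fun p => sq_nonneg _) hint).1 hJ0
        have hLag0 : Lag L η = 0 := by
          rw [Lag]
          have he : (fun p : E d × E d => L p.2) =ᵐ[η] fun _ => (0:ℝ) := by
            filter_upwards [hae] with p hp
            have h1 : p.2 = 0 := by
              have h2 : ‖p.2‖ ^ 2 = 0 := hp
              have h3 : ‖p.2‖ = 0 := by nlinarith [norm_nonneg p.2]
              simpa using h3
            simp [h1, hL0]
          rw [integral_congr_ae he]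
          simp
        refine ⟨∫ q : E d × E d, H q.2 ∂(μ.map (fun x => (x, (0 : E d)))),
          ⟨_, HopfLaxAux.zero_plan_mem hμ, by rw [HopfLaxAux.plNorm_zero_plan]; exact hK, rfl⟩, ?_⟩
        rw [hm0, hLag0]
        have he2 : ∫ q : E d × E d, H q.2 ∂(μ.map (fun x => (x, (0 : E d)))) = H 0 := by
          rw [integral_map (f := fun q : E d × E d => H q.2)
            HopfLaxAux.measurable_zero_pair.aemeasurable
            ((hHcont.comp continuous_snd).aestronglyMeasurable)]
          simp
        rw [he2]
        simpa using hHnn 0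
      · set m := plNorm η with hmdef
        have hmpos : 0 < m := lt_of_le_of_ne (Real.sqrt_nonneg _) (Ne.symm hm0)
        have hJ : ∫ p, ‖p.2‖ ^ 2 ∂η = m ^ 2 := by
          rw [hmdef, plNorm, Real.sq_sqrt hJnn]
        refine ⟨∫ q : E d × E d, H q.2 ∂(scal (-(K / m)) η),
          ⟨_, HopfLaxAux.scal_mem_plans _ hη, ?_, rfl⟩, ?_⟩
        · rw [HopfLaxAux.plNorm_scal, abs_neg, abs_of_nonneg (by positivity), ← hmdef,
            div_mul_cancel₀ _ hm0]
        · rw [HopfLaxAux.integral_scal _ _ (g := fun q : E d × E d => H q.2)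
            ((hHcont.comp continuous_snd).aestronglyMeasurable)]
          have hintH : Integrable (fun p : E d × E d => H ((-(K / m)) • p.2)) η := by
            refine HopfLaxAux.integrable_quad_snd hint (hHcont.comp (continuous_const_smul _))
              (A := Cc) (B := (K / m) ^ 2 / (4 * c)) fun z => ?_
            show |H ((-(K / m)) • z)| ≤ _
            rw [abs_of_nonneg (hHnn _)]
            have h1 := hHub ((-(K / m)) • z)
            rw [HopfLaxAux.norm_smul_sq] at h1
            have e : (-(K / m)) ^ 2 * ‖z‖ ^ 2 / (4 * c) = (K / m) ^ 2 / (4 * c) * ‖z‖ ^ 2 := by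
              ring
            linarith [e ▸ h1]
          have hintL : Integrable (fun p : E d × E d => K / m * ‖p.2‖ ^ 2 - L p.2) η := by
            refine (hint.const_mul _).sub ?_
            have := hLint 1 η hη
            simpa using this
          have hpt : ∀ p : E d × E d,
              K / m * ‖p.2‖ ^ 2 - L p.2 ≤ H ((-(K / m)) • p.2) := by
            intro p
            have h1 : rinner (-(p.2)) ((-(K / m)) • p.2) - L p.2 ≤ H ((-(K / m)) • p.2) :=
              (hH _).1 ⟨p.2, rfl⟩
            have h2 : rinner (-(p.2)) ((-(K / m)) • p.2) = K / m * ‖p.2‖ ^ 2 := by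
              rw [rinner, real_inner_smul_right, inner_neg_left, real_inner_self_eq_norm_sq]
              ring
            linarith [h2 ▸ h1]
          have hmon := integral_mono hintL hintH hpt
          rw [integral_sub (hint.const_mul _) (by simpa using hLint 1 η hη),
            MeasureTheory.integral_const_mul, hJ] at hmon
          have e : K / m * m ^ 2 = K * m := by
            field_simp
          rw [Lag]
          linarith [e ▸ hmon]
    -- assemble
    rw [hHL t, hHL (t + h), sub_le_iff_le_add]
    refine le_of_forall_pos_le_add fun ε hε => ?_
    obtain ⟨r, ⟨γ, hγ, rfl⟩, hrlt⟩ :=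
      exists_lt_of_csInf_lt (hne (T - t)) (lt_add_of_pos_right _ hε)
    haveI := hγ.1
    set s := T - t with hsdef
    set s' := T - (t + h) with hs'def
    have hss' : s' = s - h := by rw [hsdef, hs'def]; ring
    have hmem : G (expMap (scal (s' / s) γ)) + s' * Lag L (scal s'⁻¹ (scal (s' / s) γ))
        ∈ {r | ∃ γ ∈ plans μ, r = G (expMap γ) + s' * Lag L (scal s'⁻¹ γ)} :=
      ⟨_, HopfLaxAux.scal_mem_plans _ hγ, rfl⟩
    refine le_trans (csInf_le (hbdd s' hs') hmem) ?_
    have hcomp : scal s'⁻¹ (scal (s' / s) γ) = scal s⁻¹ γ := by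
      rw [HopfLaxAux.scal_scal]
      congr 1
      have h1 : s ≠ 0 := hs.ne'
      have h2 : s' ≠ 0 := hs'.ne'
      field_simp
    rw [hcomp]
    have hGlip := hG (expMap (scal (s' / s) γ))
      (HopfLaxAux.expMap_mem_P2 (HopfLaxAux.scal_mem_plans _ hγ))
      (expMap γ) (HopfLaxAux.expMap_mem_P2 hγ)
    have hW := HopfLaxAux.W2_expMap_scal hγ (s' / s)
    have habs1 : |s' / s - 1| = h / s := by
      rw [hss']
      have h1 : (s - h) / s - 1 ≤ 0 := by
        have h2 : (s - h) / s ≤ 1 := (div_le_one hs).2 (by linarith)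
        linarith
      rw [abs_of_nonpos h1]
      field_simp
      ring
    rw [habs1] at hW
    have hG2 : G (expMap (scal (s' / s) γ)) ≤ G (expMap γ) + K * (h / s * plNorm γ) := by
      have h4 := le_abs_self (G (expMap (scal (s' / s) γ)) - G (expMap γ))
      have h5 : K * W2 (expMap (scal (s' / s) γ)) (expMap γ) ≤ K * (h / s * plNorm γ) :=
        mul_le_mul_of_nonneg_left hW hK
      linarith
    obtain ⟨rr, hrrmem, hrrle⟩ := hdual (scal s⁻¹ γ) (HopfLaxAux.scal_mem_plans _ hγ)
    have hrrS : rr ≤ S := le_csSup hSbdd hrrmem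
    have hpl : plNorm (scal s⁻¹ γ) = s⁻¹ * plNorm γ := by
      rw [HopfLaxAux.plNorm_scal, abs_of_nonneg (by positivity)]
    rw [hpl] at hrrle
    have hfin : K * (s⁻¹ * plNorm γ) - Lag L (scal s⁻¹ γ) ≤ S := le_trans hrrle hrrS
    have hhS : h * (K * (s⁻¹ * plNorm γ) - Lag L (scal s⁻¹ γ)) ≤ h * S :=
      mul_le_mul_of_nonneg_left hfin hh.le
    have e2 : K * (h / s * plNorm γ) = h * (K * (s⁻¹ * plNorm γ)) := by ring
    have e3 : s' * Lag L (scal s⁻¹ γ) = s * Lag L (scal s⁻¹ γ) - h * Lag L (scal s⁻¹ γ) := by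
      rw [hss']; ring
    have e4 : h * (K * (s⁻¹ * plNorm γ) - Lag L (scal s⁻¹ γ))
        = h * (K * (s⁻¹ * plNorm γ)) - h * Lag L (scal s⁻¹ γ) := by ring
    rw [e4] at hhS
    rw [e2] at hG2
    linarith
end
end

section
/- Let ℱ : 𝒫₂(ℝ^d) → ℝ be flat differentiable at μ ∈ 𝒫₂(ℝ^d) (with flat derivative 𝒟_μℱ(μ,·) normalized by ∫ 𝒟_μℱ(μ,x) dμ = 0), and suppose there exists Λ = Λ(μ) such that for all y₀, y₁ in the support of μ whose segment lies in supp(μ), and all t, h ∈ [0,1]: ℱ((1−h)μ + hδ_{y_t}) ≤ (1−t)ℱ((1−h)μ + hδ_{y₀}) + tℱ((1−h)μ + hδ_{y₁}) − hΛ (t(1−t)/2)|y₀−y₁|², where y_t = (1−t)y₀ + ty₁. Then x ↦ 𝒟_μℱ(μ,x) is Λ-convex on supp(μ). -/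
open MeasureTheory Set Filter Metric
open scoped Topology ENNReal NNReal

noncomputable section

/-- The mixture `(1-h)·μ + h·ν`. -/
def mix {d : ℕ} (h : ℝ) (μ ν : Measure (E d)) : Measure (E d) :=
  ENNReal.ofReal (1 - h) • μ + ENNReal.ofReal h • ν

/-- A constant-speed `W₂`-geodesic in `𝒫₂`. -/
def IsGeodesic {d : ℕ} (c : ℝ → Measure (E d)) : Prop :=
  (∀ t ∈ Icc (0:ℝ) 1, c t ∈ P2 d) ∧
  ∀ s ∈ Icc (0:ℝ) 1, ∀ t ∈ Icc (0:ℝ) 1, W2 (c s) (c t) = |s - t| * W2 (c 0) (c 1)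

/-- `Λ`-geodesic convexity with respect to `W₂`. -/
def GeodesicallyConvex {d : ℕ} (Λ : ℝ) (F : Measure (E d) → ℝ) : Prop :=
  ∀ c : ℝ → Measure (E d), IsGeodesic c → ∀ t ∈ Icc (0:ℝ) 1,
    F (c t) ≤ (1 - t) * F (c 0) + t * F (c 1) - (Λ / 2) * t * (1 - t) * (W2 (c 0) (c 1)) ^ 2

/-- Sequential continuity with respect to the `W₂` distance on `𝒫₂`. -/
def W2Continuous {d : ℕ} (F : Measure (E d) → ℝ) : Prop :=
  ∀ μ ∈ P2 d, ∀ seq : ℕ → Measure (E d), (∀ n, seq n ∈ P2 d) →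
    Tendsto (fun n => W2 (seq n) μ) atTop (𝓝 0) →
    Tendsto (fun n => F (seq n)) atTop (𝓝 (F μ))

/-- The support of a measure. -/
def msupport {d : ℕ} (μ : Measure (E d)) : Set (E d) := {x | ∀ U ∈ 𝓝 x, 0 < μ U}

theorem flat_derivative_lambda_convex {d : ℕ} (F : Measure (E d) → ℝ)
    (μ : Measure (E d)) (hμ : μ ∈ P2 d) (D : E d → ℝ) (Λ : ℝ)
    (hDmeas : Measurable D)
    (hDgrowth : ∃ C : ℝ, ∀ x, |D x| ≤ C * (1 + ‖x‖ ^ 2))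
    (hDnorm : (∫ x, D x ∂μ) = 0)
    (hflat : ∀ ν ∈ P2 d,
      Tendsto (fun h : ℝ => (F (mix h μ ν) - F μ) / h) (𝓝[>] (0:ℝ))
        (𝓝 ((∫ x, D x ∂ν) - ∫ x, D x ∂μ)))
    (hineq : ∀ y₀ ∈ msupport μ, ∀ y₁ ∈ msupport μ, segment ℝ y₀ y₁ ⊆ msupport μ →
      ∀ t ∈ Icc (0:ℝ) 1, ∀ h ∈ Icc (0:ℝ) 1,
        F (mix h μ (Measure.dirac ((1 - t) • y₀ + t • y₁))) ≤
          (1 - t) * F (mix h μ (Measure.dirac y₀)) + t * F (mix h μ (Measure.dirac y₁)) -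
            h * Λ * (t * (1 - t) / 2) * ‖y₀ - y₁‖ ^ 2) :
    ∀ y₀ ∈ msupport μ, ∀ y₁ ∈ msupport μ, segment ℝ y₀ y₁ ⊆ msupport μ →
      ∀ t ∈ Icc (0:ℝ) 1,
        D ((1 - t) • y₀ + t • y₁) ≤
          (1 - t) * D y₀ + t * D y₁ - (Λ / 2) * t * (1 - t) * ‖y₀ - y₁‖ ^ 2 := by
  intro y₀ h₀ y₁ h₁ hseg t ht
  have hdir : ∀ y : E d, Measure.dirac y ∈ P2 d := by
    intro y
    refine ⟨Measure.dirac.isProbabilityMeasure, ?_⟩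
    have hm : Measurable fun x : E d => ‖x‖ ^ 2 := measurable_norm.pow_const 2
    refine ⟨hm.aestronglyMeasurable, ?_⟩
    unfold HasFiniteIntegral
    rw [lintegral_dirac' _ hm.enorm]
    exact ENNReal.coe_lt_top
  have hD : ∀ y : E d, (∫ x, D x ∂(Measure.dirac y)) = D y := fun y =>
    integral_dirac' D y hDmeas.stronglyMeasurable
  have key : ∀ y : E d,
      Tendsto (fun h : ℝ => (F (mix h μ (Measure.dirac y)) - F μ) / h) (𝓝[>] (0:ℝ))
        (𝓝 (D y)) := by
    intro y
    have := hflat (Measure.dirac y) (hdir y)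
    rwa [hD, hDnorm, sub_zero] at this
  set yt := (1 - t) • y₀ + t • y₁ with hyt
  have hlim1 := key yt
  have hlim2 : Tendsto (fun h : ℝ =>
      (1 - t) * ((F (mix h μ (Measure.dirac y₀)) - F μ) / h)
      + t * ((F (mix h μ (Measure.dirac y₁)) - F μ) / h)
      - Λ * (t * (1 - t) / 2) * ‖y₀ - y₁‖ ^ 2) (𝓝[>] (0:ℝ))
      (𝓝 ((1 - t) * D y₀ + t * D y₁ - Λ * (t * (1 - t) / 2) * ‖y₀ - y₁‖ ^ 2)) := by
    exact (((key y₀).const_mul _).add ((key y₁).const_mul _)).sub tendsto_const_nhds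
  have hev : ∀ᶠ h : ℝ in 𝓝[>] (0:ℝ),
      (F (mix h μ (Measure.dirac yt)) - F μ) / h ≤
      (1 - t) * ((F (mix h μ (Measure.dirac y₀)) - F μ) / h)
      + t * ((F (mix h μ (Measure.dirac y₁)) - F μ) / h)
      - Λ * (t * (1 - t) / 2) * ‖y₀ - y₁‖ ^ 2 := by
    have hmem : Ioc (0:ℝ) 1 ∈ 𝓝[>] (0:ℝ) :=
      Ioc_mem_nhdsGT_of_mem ⟨le_refl _, one_pos⟩
    filter_upwards [hmem] with h hh
    have hieq := hineq y₀ h₀ y₁ h₁ hseg t ht h ⟨hh.1.le, hh.2⟩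
    have hpos : (0:ℝ) < h := hh.1
    have hFμ : (1 - t) * F μ + t * F μ = F μ := by ring
    have h1 : F (mix h μ (Measure.dirac yt)) - F μ ≤
        (1 - t) * (F (mix h μ (Measure.dirac y₀)) - F μ)
        + t * (F (mix h μ (Measure.dirac y₁)) - F μ)
        - h * (Λ * (t * (1 - t) / 2) * ‖y₀ - y₁‖ ^ 2) := by
      have : (1 - t) * (F (mix h μ (Measure.dirac y₀)) - F μ)
          + t * (F (mix h μ (Measure.dirac y₁)) - F μ)
          - h * (Λ * (t * (1 - t) / 2) * ‖y₀ - y₁‖ ^ 2)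
          = (1 - t) * F (mix h μ (Measure.dirac y₀)) + t * F (mix h μ (Measure.dirac y₁))
            - h * Λ * (t * (1 - t) / 2) * ‖y₀ - y₁‖ ^ 2 - F μ := by ring
      rw [this]
      linarith [hieq]
    calc (F (mix h μ (Measure.dirac yt)) - F μ) / h
        ≤ ((1 - t) * (F (mix h μ (Measure.dirac y₀)) - F μ)
          + t * (F (mix h μ (Measure.dirac y₁)) - F μ)
          - h * (Λ * (t * (1 - t) / 2) * ‖y₀ - y₁‖ ^ 2)) / h := by gcongr
      _ = (1 - t) * ((F (mix h μ (Measure.dirac y₀)) - F μ) / h)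
          + t * ((F (mix h μ (Measure.dirac y₁)) - F μ) / h)
          - Λ * (t * (1 - t) / 2) * ‖y₀ - y₁‖ ^ 2 := by
          field_simp
  have hfin : D yt ≤ (1 - t) * D y₀ + t * D y₁ - Λ * (t * (1 - t) / 2) * ‖y₀ - y₁‖ ^ 2 :=
    le_of_tendsto_of_tendsto hlim1 hlim2 hev
  have : Λ * (t * (1 - t) / 2) * ‖y₀ - y₁‖ ^ 2 = Λ / 2 * t * (1 - t) * ‖y₀ - y₁‖ ^ 2 := by ring
  linarith
end
end

section
/- For any μ, ν ∈ 𝒫₂(ℝ^d) and any optimal coupling σ ∈ Γ₀(μ,ν), the plan ξ := (π₁, π₁ − π₂)_# σ belongs to the superdifferential at μ of the function Φ : η ↦ (1/2)W₂²(η,ν). Concretely: for every plan ζ on ℝ^{2d} with first marginal μ and finite second moment, and every θ ∈ Γ_μ(ξ,ζ), one has (1/2)W₂²(exp_μ(ζ), ν) − (1/2)W₂²(μ,ν) ≤ ∫ ⟨y, z⟩ dθ(x,y,z) + (1/2)‖ζ‖²_μ. -/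
open MeasureTheory Set Filter Metric
open scoped Topology ENNReal NNReal

noncomputable section

theorem w2sq_superdifferential {d : ℕ} (μ ν : Measure (E d)) (hμ : μ ∈ P2 d) (hν : ν ∈ P2 d)
    (σ : Measure (E d × E d)) (hσp : IsProbabilityMeasure σ) (hσ : IsCoupling σ μ ν)
    (hopt : Real.sqrt (∫ p, ‖p.1 - p.2‖ ^ 2 ∂σ) = W2 μ ν) :
    ∀ ζ ∈ plans μ, ∀ θ ∈ GammaMu (σ.map (fun p => (p.1, p.1 - p.2))) ζ,
      (1 / 2) * (W2 (expMap ζ) ν) ^ 2 - (1 / 2) * (W2 μ ν) ^ 2 ≤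
        (∫ q, (rinner (q.2.1) (q.2.2)) ∂θ) + (1 / 2) * (plNorm ζ) ^ 2 := by
  obtain ⟨hμp, hμ2⟩ := hμ
  obtain ⟨hνp, hν2⟩ := hν
  obtain ⟨hσ1, hσ2⟩ := hσ
  intro ζ hζ θ hθ
  obtain ⟨hζp, hζ1, hζ2⟩ := hζ
  obtain ⟨hθp, hθ1, hθ2⟩ := hθ
  -- measurability helpers
  have m1 : Measurable fun q : E d × E d × E d => (q.1, q.2.1) :=
    measurable_fst.prodMk (measurable_snd.fst)
  have m2 : Measurable fun q : E d × E d × E d => (q.1, q.2.2) :=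
    measurable_fst.prodMk (measurable_snd.snd)
  have mξ : Measurable fun p : E d × E d => (p.1, p.1 - p.2) :=
    measurable_fst.prodMk (measurable_fst.sub measurable_snd)
  have mF : Measurable fun q : E d × E d × E d => (q.1 + q.2.2, q.1 - q.2.1) :=
    (measurable_fst.add measurable_snd.snd).prodMk (measurable_fst.sub measurable_snd.fst)
  -- integrability on σ
  have hint1 : Integrable (fun p : E d × E d => ‖p.1‖ ^ 2) σ := by
    rw [← hσ1] at hμ2
    exact (integrable_map_measure
      (continuous_norm.pow 2).aestronglyMeasurable measurable_fst.aemeasurable).mp hμ2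
  have hint2 : Integrable (fun p : E d × E d => ‖p.2‖ ^ 2) σ := by
    rw [← hσ2] at hν2
    exact (integrable_map_measure
      (continuous_norm.pow 2).aestronglyMeasurable measurable_snd.aemeasurable).mp hν2
  have hintσ : Integrable (fun p : E d × E d => ‖p.1 - p.2‖ ^ 2) σ := by
    refine ((hint1.const_mul 2).add (hint2.const_mul 2)).mono'
      (((continuous_fst.sub continuous_snd).norm.pow 2).aestronglyMeasurable) ?_
    filter_upwards with p
    have h := norm_sub_le p.1 p.2
    simp only [Pi.add_apply]
    rw [Real.norm_of_nonneg (by positivity)]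
    nlinarith [sq_nonneg (‖p.1‖ - ‖p.2‖), norm_nonneg (p.1 - p.2), norm_nonneg p.1,
      norm_nonneg p.2]
  set ξ := σ.map (fun p : E d × E d => (p.1, p.1 - p.2)) with hξdef
  have hintξ : Integrable (fun p : E d × E d => ‖p.2‖ ^ 2) ξ := by
    rw [hξdef]
    exact (integrable_map_measure (continuous_snd.norm.pow 2).aestronglyMeasurable
      mξ.aemeasurable).mpr hintσ
  have hcostξ : ∫ p, ‖p.2‖ ^ 2 ∂ξ = ∫ p, ‖p.1 - p.2‖ ^ 2 ∂σ := by
    rw [hξdef, integral_map mξ.aemeasurable (f := fun p : E d × E d => ‖p.2‖ ^ 2) (continuous_snd.norm.pow 2).aestronglyMeasurable]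
  -- integrability on θ
  have hY : Integrable (fun q : E d × E d × E d => ‖q.2.1‖ ^ 2) θ := by
    rw [← hθ1] at hintξ
    exact (integrable_map_measure (continuous_snd.norm.pow 2).aestronglyMeasurable
      m1.aemeasurable).mp hintξ
  have hintζ : Integrable (fun p : E d × E d => ‖p.2‖ ^ 2) ζ := by
    refine hζ2.mono' (continuous_snd.norm.pow 2).aestronglyMeasurable ?_
    filter_upwards with p
    rw [Real.norm_of_nonneg (by positivity)]
    nlinarith [norm_nonneg p.1]
  have hZ : Integrable (fun q : E d × E d × E d => ‖q.2.2‖ ^ 2) θ := by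
    rw [← hθ2] at hintζ
    exact (integrable_map_measure (continuous_snd.norm.pow 2).aestronglyMeasurable
      m2.aemeasurable).mp hintζ
  have hinnercont : Continuous fun q : E d × E d × E d => rinner q.2.1 q.2.2 := by
    unfold rinner
    exact continuous_snd.fst.inner continuous_snd.snd
  have hYZ : Integrable (fun q : E d × E d × E d => rinner q.2.1 q.2.2) θ := by
    refine ((hY.const_mul (1/2)).add (hZ.const_mul (1/2))).mono'
      hinnercont.aestronglyMeasurable ?_
    filter_upwards with q
    have h := abs_real_inner_le_norm q.2.1 q.2.2
    have h2 : ‖rinner q.2.1 q.2.2‖ = |inner ℝ q.2.1 q.2.2| := rfl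
    simp only [Pi.add_apply]
    rw [h2]
    nlinarith [sq_nonneg (‖q.2.1‖ - ‖q.2.2‖), norm_nonneg q.2.1, norm_nonneg q.2.2]
  -- expansion of the square
  have hexpand : ∀ q : E d × E d × E d,
      ‖q.2.1 + q.2.2‖ ^ 2 = ‖q.2.1‖ ^ 2 + 2 * rinner q.2.1 q.2.2 + ‖q.2.2‖ ^ 2 := by
    intro q
    unfold rinner
    exact norm_add_sq_real q.2.1 q.2.2
  have hsum : Integrable (fun q : E d × E d × E d => ‖q.2.1 + q.2.2‖ ^ 2) θ := by
    have : (fun q : E d × E d × E d => ‖q.2.1 + q.2.2‖ ^ 2)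
        = fun q => ‖q.2.1‖ ^ 2 + 2 * rinner q.2.1 q.2.2 + ‖q.2.2‖ ^ 2 := funext hexpand
    rw [this]
    exact (hY.add (hYZ.const_mul 2)).add hZ
  have hsplit : ∫ q, ‖q.2.1 + q.2.2‖ ^ 2 ∂θ
      = (∫ q, ‖q.2.1‖ ^ 2 ∂θ) + 2 * (∫ q, rinner q.2.1 q.2.2 ∂θ)
        + ∫ q, ‖q.2.2‖ ^ 2 ∂θ := by
    have : (fun q : E d × E d × E d => ‖q.2.1 + q.2.2‖ ^ 2)
        = fun q => ‖q.2.1‖ ^ 2 + 2 * rinner q.2.1 q.2.2 + ‖q.2.2‖ ^ 2 := funext hexpand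
    have hg2 : Integrable (fun q : E d × E d × E d => 2 * rinner q.2.1 q.2.2) θ :=
      hYZ.const_mul 2
    have hfg : Integrable
        (fun q : E d × E d × E d => ‖q.2.1‖ ^ 2 + 2 * rinner q.2.1 q.2.2) θ := hY.add hg2
    rw [this, integral_add hfg hZ, integral_add hY hg2, integral_const_mul]
  -- identify the integrals
  have hYval : ∫ q, ‖q.2.1‖ ^ 2 ∂θ = ∫ p, ‖p.1 - p.2‖ ^ 2 ∂σ := by
    rw [← hcostξ, ← hθ1,
      integral_map m1.aemeasurable (f := fun p : E d × E d => ‖p.2‖ ^ 2) (continuous_snd.norm.pow 2).aestronglyMeasurable]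
  have hZval : ∫ q, ‖q.2.2‖ ^ 2 ∂θ = ∫ p, ‖p.2‖ ^ 2 ∂ζ := by
    rw [← hθ2,
      integral_map m2.aemeasurable (f := fun p : E d × E d => ‖p.2‖ ^ 2) (continuous_snd.norm.pow 2).aestronglyMeasurable]
  -- the competitor coupling
  set γ := θ.map (fun q : E d × E d × E d => (q.1 + q.2.2, q.1 - q.2.1)) with hγdef
  have hγp : IsProbabilityMeasure γ := Measure.isProbabilityMeasure_map mF.aemeasurable
  have hγ1 : γ.map Prod.fst = expMap ζ := by
    rw [hγdef, Measure.map_map measurable_fst mF]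
    have : (Prod.fst ∘ fun q : E d × E d × E d => (q.1 + q.2.2, q.1 - q.2.1))
        = (fun p : E d × E d => p.1 + p.2) ∘ fun q => (q.1, q.2.2) := rfl
    rw [this, ← Measure.map_map (g := fun p : E d × E d => p.1 + p.2) (measurable_fst.add measurable_snd) m2, hθ2]
    rfl
  have hγ2 : γ.map Prod.snd = ν := by
    rw [hγdef, Measure.map_map measurable_snd mF]
    have : (Prod.snd ∘ fun q : E d × E d × E d => (q.1 + q.2.2, q.1 - q.2.1))
        = (fun p : E d × E d => p.1 - p.2) ∘ fun q => (q.1, q.2.1) := rfl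
    rw [this, ← Measure.map_map (g := fun p : E d × E d => p.1 - p.2) (measurable_fst.sub measurable_snd) m1, hθ1, hξdef,
      Measure.map_map (g := fun p : E d × E d => p.1 - p.2) (measurable_fst.sub measurable_snd) mξ]
    have h2 : ((fun p : E d × E d => p.1 - p.2) ∘ fun p : E d × E d => (p.1, p.1 - p.2))
        = Prod.snd := by
      funext p; simp
    rw [h2, hσ2]
  have hγcost : ∫ p, ‖p.1 - p.2‖ ^ 2 ∂γ = ∫ q, ‖q.2.1 + q.2.2‖ ^ 2 ∂θ := by
    rw [hγdef, integral_map mF.aemeasurable (f := fun p : E d × E d => ‖p.1 - p.2‖ ^ 2)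
      ((continuous_fst.sub continuous_snd).norm.pow 2).aestronglyMeasurable]
    congr 1
    funext q
    congr 1
    have : q.1 + q.2.2 - (q.1 - q.2.1) = q.2.1 + q.2.2 := by abel
    rw [this]
  -- W2 bounds
  have hγcost_nonneg : 0 ≤ ∫ p, ‖p.1 - p.2‖ ^ 2 ∂γ :=
    integral_nonneg fun p => by positivity
  have hW2mem : Real.sqrt (∫ p, ‖p.1 - p.2‖ ^ 2 ∂γ) ∈
      {c | ∃ γ' : Measure (E d × E d), IsProbabilityMeasure γ' ∧
        IsCoupling γ' (expMap ζ) ν ∧ c = Real.sqrt (∫ p, ‖p.1 - p.2‖ ^ 2 ∂γ')} :=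
    ⟨γ, hγp, ⟨hγ1, hγ2⟩, rfl⟩
  have hbdd : BddBelow {c | ∃ γ' : Measure (E d × E d), IsProbabilityMeasure γ' ∧
      IsCoupling γ' (expMap ζ) ν ∧ c = Real.sqrt (∫ p, ‖p.1 - p.2‖ ^ 2 ∂γ')} := by
    refine ⟨0, fun c hc => ?_⟩
    obtain ⟨γ', _, _, rfl⟩ := hc
    exact Real.sqrt_nonneg _
  have hW2le : W2 (expMap ζ) ν ≤ Real.sqrt (∫ p, ‖p.1 - p.2‖ ^ 2 ∂γ) :=
    csInf_le hbdd hW2mem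
  have hW2nonneg : 0 ≤ W2 (expMap ζ) ν := by
    apply Real.sInf_nonneg
    rintro c ⟨γ', _, _, rfl⟩
    exact Real.sqrt_nonneg _
  have hW2sq : (W2 (expMap ζ) ν) ^ 2 ≤ ∫ p, ‖p.1 - p.2‖ ^ 2 ∂γ := by
    have := pow_le_pow_left₀ hW2nonneg hW2le 2
    rwa [Real.sq_sqrt hγcost_nonneg] at this
  -- identify W2 μ ν and plNorm
  have hσcost_nonneg : 0 ≤ ∫ p, ‖p.1 - p.2‖ ^ 2 ∂σ :=
    integral_nonneg fun p => by positivity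
  have hWμν : (W2 μ ν) ^ 2 = ∫ p, ‖p.1 - p.2‖ ^ 2 ∂σ := by
    rw [← hopt, Real.sq_sqrt hσcost_nonneg]
  have hζcost_nonneg : 0 ≤ ∫ p, ‖p.2‖ ^ 2 ∂ζ :=
    integral_nonneg fun p => by positivity
  have hplN : (plNorm ζ) ^ 2 = ∫ p, ‖p.2‖ ^ 2 ∂ζ := by
    rw [plNorm, Real.sq_sqrt hζcost_nonneg]
  rw [hγcost, hsplit, hYval, hZval] at hW2sq
  rw [hWμν, hplN]
  linarith
end
end
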